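/- arXiv:1309.5757 — 3 statements merged into one kernel-verified Lean document; each statement's English description precedes it below -/
import Mathlib

section
/- Let X₁, X₂, … be i.i.d. exponential random variables with mean 1, and let λ₁, λ₂, … be positive real numbers. Then for any t ≥ 0 and any integer k ≥ 1: (t^k / ∏_{i=1}^k (k + λ_i t)) · ∏_{i=1}^k λ_i ≤ ℙ(Σ_{i=1}^k X_i/λ_i ≤ t) ≤ (e t / k)^k ∏_{i=1}^k λ_i. Moreover, if λ_i ≥ λ > 0 for all i and Λ := Σ_{i=1}^k 1/λ_i, then for any t ≥ Λ, ℙ(Σ_{i=1}^k X_i/λ_i ≥ t) ≤ exp(−λ(t − Λ)² / (2t)). -/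
open MeasureTheory ProbabilityTheory Filter
open scoped ENNReal NNReal

noncomputable section

open Real Set

set_option linter.unusedSectionVars false
set_option linter.deprecated false

section Helpers


lemma gammaPDFReal_one_one (x : ℝ) :
    gammaPDFReal 1 1 x = if 0 ≤ x then Real.exp (-x) else 0 := by
  unfold gammaPDFReal
  simp [Real.Gamma_one, Real.rpow_one]

lemma expMeasure_eq : expMeasure 1 = volume.withDensity (gammaPDF 1 1) := rfl

lemma integrable_exp_expMeasure {s : ℝ} (hs : s < 1) :
    Integrable (fun x => Real.exp (s * x)) (expMeasure 1) := by
  have hpd : gammaPDF 1 1 = fun x => ENNReal.ofReal (gammaPDFReal 1 1 x) := rfl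
  rw [expMeasure_eq, hpd]
  rw [integrable_withDensity_iff ((measurable_gammaPDFReal 1 1).ennreal_ofReal)
    (ae_of_all _ fun x => ENNReal.ofReal_lt_top)]
  have : (fun x => Real.exp (s * x) * ((ENNReal.ofReal (gammaPDFReal 1 1 x)).toReal))
      = Set.indicator (Ici 0) (fun x => Real.exp (-(1-s) * x)) := by
    funext x
    rw [ENNReal.toReal_ofReal (gammaPDFReal_nonneg zero_lt_one zero_lt_one x),
      gammaPDFReal_one_one]
    by_cases hx : 0 ≤ x
    · simp [hx, ← Real.exp_add]
      ring_nf
    · simp [hx, Set.indicator_of_notMem, (by simpa using hx : x ∉ Ici (0:ℝ))]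
  rw [this, integrable_indicator_iff measurableSet_Ici, integrableOn_Ici_iff_integrableOn_Ioi]
  exact exp_neg_integrableOn_Ioi 0 (by linarith)

lemma integral_exp_expMeasure {s : ℝ} (hs : s < 1) :
    ∫ x, Real.exp (s * x) ∂(expMeasure 1) = (1 - s)⁻¹ := by
  rw [expMeasure_eq]
  have hd : (gammaPDF 1 1) = fun x => ((Real.toNNReal (gammaPDFReal 1 1 x) : ℝ≥0) : ℝ≥0∞) := rfl
  rw [hd, integral_withDensity_eq_integral_smul
    ((measurable_gammaPDFReal 1 1).real_toNNReal)]
  have : (fun x => (Real.toNNReal (gammaPDFReal 1 1 x)) • Real.exp (s * x))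
      = Set.indicator (Ici 0) (fun x => Real.exp (-((1-s) * x))) := by
    funext x
    rw [NNReal.smul_def, smul_eq_mul, Real.coe_toNNReal _
      (gammaPDFReal_nonneg zero_lt_one zero_lt_one x), gammaPDFReal_one_one]
    by_cases hx : 0 ≤ x
    · simp [hx, ← Real.exp_add]
      ring_nf
    · simp [hx, (by simpa using hx : x ∉ Ici (0:ℝ))]
  rw [this, integral_indicator measurableSet_Ici, integral_Ici_eq_integral_Ioi]
  have h1s : 0 < 1 - s := by linarith
  have := integral_rpow_mul_exp_neg_mul_Ioi (a := 1) (r := 1 - s) zero_lt_one h1s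
  simp only [sub_self, Real.rpow_zero, one_mul, Real.rpow_one, Real.Gamma_one, mul_one] at this
  rw [this, one_div]

lemma expMeasure_Iic (c : ℝ) :
    expMeasure 1 (Iic c) = ENNReal.ofReal (if 0 ≤ c then 1 - Real.exp (-(1 * c)) else 0) := by
  rw [expMeasure_eq, withDensity_apply _ measurableSet_Iic,
    ← lintegral_exponentialPDF_eq_antiDeriv zero_lt_one c]
  rfl


lemma one_sub_exp_neg_lb {x : ℝ} (hx : 0 ≤ x) : x / (1 + x) ≤ 1 - Real.exp (-x) := by
  have h1 : (0:ℝ) < 1 + x := by linarith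
  have h2 : Real.exp (-x) ≤ (1+x)⁻¹ := by
    rw [Real.exp_neg]
    exact inv_anti₀ h1 (by linarith [Real.add_one_le_exp x])
  have h3 : x / (1+x) = 1 - (1+x)⁻¹ := by field_simp; ring
  linarith

lemma hasDeriv_aux {x : ℝ} (hx : x < 1) :
    HasDerivAt (fun y => Real.log (1-y) + (y + y^2/(2*(1-y))))
      (x^2/(2*(1-x)^2)) x := by
  have h1 : (1:ℝ) - x ≠ 0 := by intro h; linarith [(sub_eq_zero.mp h)]
  have hsub : HasDerivAt (fun y : ℝ => 1 - y) (-1) x := by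
    simpa using (hasDerivAt_id' x).const_sub (1:ℝ)
  have hlog : HasDerivAt (fun y => Real.log (1-y)) ((1-x)⁻¹ * (-1)) x :=
    (Real.hasDerivAt_log h1).comp x hsub
  have hden : HasDerivAt (fun y : ℝ => 2*(1-y)) (-2) x := by
    simpa using hsub.const_mul (2:ℝ)
  have h1' : (0:ℝ) < 1 - x := by linarith
  have hden' : 2*(1-x) ≠ 0 := by positivity
  have hq : HasDerivAt (fun y : ℝ => y^2/(2*(1-y)))
      (((2:ℕ) * x^(1:ℕ) * (2*(1-x)) - x^2 * (-2))/(2*(1-x))^2) x :=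
    (hasDerivAt_pow 2 x).div hden hden'
  have := hlog.add ((hasDerivAt_id x).add hq)
  refine this.congr_deriv ?_
  field_simp
  ring

lemma neg_log_one_sub_le {x : ℝ} (hx0 : 0 ≤ x) (hx1 : x < 1) :
    -Real.log (1-x) ≤ x + x^2/(2*(1-x)) := by
  set g : ℝ → ℝ := fun y => Real.log (1-y) + (y + y^2/(2*(1-y))) with hg
  have hmono : MonotoneOn g (Iio 1) := by
    have hint : interior (Iio (1:ℝ)) = Iio 1 := interior_Iio
    refine monotoneOn_of_deriv_nonneg (convex_Iio 1) ?_ ?_ ?_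
    · exact fun y hy => ((hasDeriv_aux hy).differentiableAt.continuousAt).continuousWithinAt
    · rw [hint]; exact fun y hy => (hasDeriv_aux hy).differentiableAt.differentiableWithinAt
    · rw [hint]
      intro y hy
      rw [(hasDeriv_aux hy).deriv]
      positivity
  have h0 : g 0 = 0 := by simp [hg]
  have := hmono (by simp : (0:ℝ) ∈ Iio 1) (by simpa using hx1) hx0
  rw [h0] at this
  simp only [hg] at this
  linarith

lemma inv_one_sub_le_exp {x : ℝ} (hx0 : 0 ≤ x) (hx1 : x < 1) :
    (1-x)⁻¹ ≤ Real.exp (x + x^2/(2*(1-x))) := by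
  have h1 : (0:ℝ) < 1 - x := by linarith
  have : (1-x)⁻¹ = Real.exp (-Real.log (1-x)) := by
    rw [Real.exp_neg, Real.exp_log h1]
  rw [this]
  exact Real.exp_le_exp.mpr (neg_log_one_sub_le hx0 hx1)

variable {Ω : Type} [MeasurableSpace Ω] {P : Measure Ω} [IsProbabilityMeasure P]

lemma integrable_exp_div {X : Ω → ℝ} (hX : Measurable X) (hd : Measure.map X P = expMeasure 1)
    {l θ : ℝ} (hl : 0 < l) (h : θ < l) :
    Integrable (fun ω => Real.exp (θ * (X ω / l))) P := by
  have hc : θ / l < 1 := (div_lt_one hl).2 h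
  have he : (fun ω => Real.exp (θ * (X ω / l))) = (fun x => Real.exp ((θ/l) * x)) ∘ X := by
    funext ω; simp only [Function.comp_apply]; congr 1; ring
  rw [he]
  have hm : Measurable fun x : ℝ => Real.exp ((θ/l) * x) := by fun_prop
  have := integrable_exp_expMeasure hc
  rw [← hd] at this
  exact (integrable_map_measure hm.aestronglyMeasurable hX.aemeasurable).mp this

lemma mgf_div {X : Ω → ℝ} (hX : Measurable X) (hd : Measure.map X P = expMeasure 1)
    {l θ : ℝ} (hl : 0 < l) (h : θ < l) :
    mgf (fun ω => X ω / l) P θ = (1 - θ/l)⁻¹ := by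
  have hc : θ / l < 1 := (div_lt_one hl).2 h
  have he : (fun ω => Real.exp (θ * (X ω / l))) = fun ω => Real.exp ((θ/l) * X ω) := by
    funext ω; congr 1; ring
  rw [mgf]
  show ∫ ω, Real.exp (θ * (X ω / l)) ∂P = _
  have hm : Measurable fun x : ℝ => Real.exp ((θ/l) * x) := by fun_prop
  rw [he, ← integral_map hX.aemeasurable hm.aestronglyMeasurable, hd,
    integral_exp_expMeasure hc]

end Helpers

/-- **Tail estimates for weighted sums of exponentials** (Lemma 2.1). Let
`X₁, X₂, …` be i.i.d. mean-one exponential random variables and `λ₁, λ₂, … > 0`.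
Then for any `t ≥ 0` and `k ≥ 1`,
`(t^k/∏(k+λᵢt)) ∏λᵢ ≤ ℙ(Σ Xᵢ/λᵢ ≤ t) ≤ (et/k)^k ∏λᵢ`, and if `λᵢ ≥ λ > 0` for
all `i` and `Λ := Σᵢ₌₁ᵏ 1/λᵢ`, then for any `t ≥ Λ`,
`ℙ(Σ Xᵢ/λᵢ ≥ t) ≤ exp(-λ(t-Λ)²/(2t))`. -/
theorem exponential_sum_tails {Ω : Type} [MeasurableSpace Ω] (P : Measure Ω)
    [IsProbabilityMeasure P]
    (X : ℕ → Ω → ℝ) (hmeas : ∀ i, Measurable (X i))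
    (hindep : iIndepFun X P)
    (hdist : ∀ i, Measure.map (X i) P = expMeasure 1)
    (lam : ℕ → ℝ) (hlam : ∀ i, 0 < lam i) :
    (∀ (t : ℝ) (k : ℕ), 0 ≤ t → 1 ≤ k →
      ENNReal.ofReal ((t ^ k / ∏ i ∈ Finset.range k, ((k : ℝ) + lam i * t))
          * ∏ i ∈ Finset.range k, lam i)
        ≤ P {o | (∑ i ∈ Finset.range k, X i o / lam i) ≤ t} ∧
      P {o | (∑ i ∈ Finset.range k, X i o / lam i) ≤ t}
        ≤ ENNReal.ofReal ((Real.exp 1 * t / k) ^ k * ∏ i ∈ Finset.range k, lam i)) ∧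
    (∀ (lam₀ : ℝ) (k : ℕ) (t : ℝ), 1 ≤ k → 0 < lam₀ → (∀ i, lam₀ ≤ lam i) →
      (∑ i ∈ Finset.range k, 1 / lam i) ≤ t →
      P {o | t ≤ ∑ i ∈ Finset.range k, X i o / lam i}
        ≤ ENNReal.ofReal (Real.exp
            (-(lam₀ * (t - ∑ i ∈ Finset.range k, 1 / lam i) ^ 2 / (2 * t))))) := by
  -- common setup
  set Y : ℕ → Ω → ℝ := fun i ω => X i ω / lam i with hY
  have hYmeas : ∀ i, Measurable (Y i) := fun i => (hmeas i).div_const _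
  have hYindep : iIndepFun Y P :=
    hindep.comp (fun i x => x / lam i) (fun i => measurable_id.div_const _)
  have hIic : ∀ (i : ℕ) (c : ℝ), P {ω | X i ω ≤ c}
      = ENNReal.ofReal (if 0 ≤ c then 1 - Real.exp (-(1 * c)) else 0) := by
    intro i c
    have h1 : {ω | X i ω ≤ c} = X i ⁻¹' Iic c := rfl
    rw [h1, ← Measure.map_apply (hmeas i) measurableSet_Iic, hdist i, expMeasure_Iic]
  have hset : ∀ k, (fun o => (∑ i ∈ Finset.range k, X i o / lam i))
      = (∑ i ∈ Finset.range k, Y i) := by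
    intro k; funext o; rw [Finset.sum_apply]
  constructor
  · intro t k ht hk
    have hk0 : (0:ℝ) < (k:ℝ) := by exact_mod_cast Nat.pos_of_ne_zero (by omega)
    constructor
    · -- lower bound
      have hsub : (⋂ i ∈ Finset.range k, {ω | X i ω ≤ lam i * t / k})
          ⊆ {o | (∑ i ∈ Finset.range k, X i o / lam i) ≤ t} := by
        intro ω hω
        simp only [Set.mem_iInter, Set.mem_setOf_eq] at hω ⊢
        calc ∑ i ∈ Finset.range k, X i ω / lam i
            ≤ ∑ _i ∈ Finset.range k, t / k := by
              refine Finset.sum_le_sum fun i hi => ?_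
              rw [div_le_div_iff₀ (hlam i) hk0]
              have h2 := hω i hi
              rw [le_div_iff₀ hk0] at h2
              linarith
          _ = t := by
              rw [Finset.sum_const, Finset.card_range, nsmul_eq_mul]
              field_simp
      have hprod : P (⋂ i ∈ Finset.range k, {ω | X i ω ≤ lam i * t / k})
          = ∏ i ∈ Finset.range k, P {ω | X i ω ≤ lam i * t / k} :=
        hindep.meas_biInter fun i _ => ⟨Iic (lam i * t / k), measurableSet_Iic, rfl⟩
      refine le_trans ?_ (measure_mono hsub)
      rw [hprod]
      have hval : ∀ i ∈ Finset.range k, P {ω | X i ω ≤ lam i * t / k}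
          = ENNReal.ofReal (1 - Real.exp (-(lam i * t / k))) := by
        intro i _
        have hli := hlam i
        rw [hIic i, if_pos (by positivity), one_mul]
      rw [Finset.prod_congr rfl hval, ← ENNReal.ofReal_prod_of_nonneg (fun i _ => by
        have hli := hlam i
        have : Real.exp (-(lam i * t / k)) ≤ 1 := by
          rw [Real.exp_le_one_iff]
          have : (0:ℝ) ≤ lam i * t / k := by positivity
          linarith
        linarith)]
      apply ENNReal.ofReal_le_ofReal
      have hq : (t ^ k / ∏ i ∈ Finset.range k, ((k:ℝ) + lam i * t)) * ∏ i ∈ Finset.range k, lam i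
          = ∏ i ∈ Finset.range k, (t * lam i / ((k:ℝ) + lam i * t)) := by
        rw [Finset.prod_div_distrib, Finset.prod_mul_distrib, Finset.prod_const,
          Finset.card_range]
        ring
      rw [hq]
      refine Finset.prod_le_prod (fun i _ => by have := hlam i; positivity) fun i _ => ?_
      have hx : 0 ≤ lam i * t / k := by have := hlam i; positivity
      have h1 := one_sub_exp_neg_lb hx
      have hli := hlam i
      have hd1 : (0:ℝ) < 1 + lam i * t / k := by positivity
      have hd2 : (0:ℝ) < (k:ℝ) + lam i * t := by positivity
      have heq : (lam i * t / k) / (1 + lam i * t / k) = t * lam i / ((k:ℝ) + lam i * t) := by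
        field_simp
      rw [← heq]
      exact one_sub_exp_neg_lb (by positivity)
    · rcases eq_or_lt_of_le ht with rfl | htpos
      · -- t = 0
        have hzero : P {o | (∑ i ∈ Finset.range k, X i o / lam i) ≤ (0:ℝ)} = 0 := by
          have hs2 : {o | (∑ i ∈ Finset.range k, X i o / lam i) ≤ (0:ℝ)}
              ⊆ ⋃ i ∈ Finset.range k, {ω | X i ω ≤ 0} := by
            intro ω hω
            by_contra hc
            simp only [Set.mem_iUnion, Set.mem_setOf_eq, not_exists, not_le] at hc
            have hpos : 0 < ∑ i ∈ Finset.range k, X i ω / lam i :=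
              Finset.sum_pos (fun i hi => div_pos (hc i hi) (hlam i))
                ⟨0, Finset.mem_range.2 (by omega)⟩
            simp only [Set.mem_setOf_eq] at hω
            linarith
          refine le_antisymm (le_trans (measure_mono hs2) ?_) zero_le
          refine le_trans (measure_biUnion_finset_le _ _) ?_
          have hz : ∀ i ∈ Finset.range k, P {ω | X i ω ≤ (0:ℝ)} = 0 := by
            intro i _
            rw [hIic i 0]
            simp
          rw [Finset.sum_congr rfl hz]
          simp
        rw [hzero]
        exact zero_le
      · set θ : ℝ := (k:ℝ)/t with hθ
        have hθpos : 0 < θ := by rw [hθ]; positivity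
        have hInt : Integrable (fun ω => Real.exp (-θ * (∑ i ∈ Finset.range k, Y i) ω)) P := by
          refine hYindep.integrable_exp_mul_sum hYmeas fun i _ => ?_
          exact integrable_exp_div (hmeas i) (hdist i) (hlam i) (by linarith [hlam i])
        have hch := measure_le_le_exp_mul_mgf (μ := P) (X := ∑ i ∈ Finset.range k, Y i) t
          (by linarith : -θ ≤ 0) hInt
        have hmgf : mgf (∑ i ∈ Finset.range k, Y i) P (-θ)
            = ∏ i ∈ Finset.range k, (1 - (-θ)/lam i)⁻¹ := by
          rw [hYindep.mgf_sum hYmeas]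
          exact Finset.prod_congr rfl fun i _ =>
            mgf_div (hmeas i) (hdist i) (hlam i) (by linarith [hlam i])
        have hbd : ∏ i ∈ Finset.range k, (1 - (-θ)/lam i)⁻¹
            ≤ ∏ i ∈ Finset.range k, (lam i / θ) := by
          refine Finset.prod_le_prod (fun i _ => ?_) (fun i _ => ?_)
          · have hli := hlam i
            have : (0:ℝ) < 1 - (-θ)/lam i := by
              have : (0:ℝ) < θ/lam i := by positivity
              rw [neg_div, sub_neg_eq_add]
              linarith
            positivity
          · have hli := hlam i
            have h0 : (0:ℝ) < θ/lam i := by positivity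
            rw [neg_div, sub_neg_eq_add]
            calc (1 + θ/lam i)⁻¹ ≤ (θ/lam i)⁻¹ :=
                inv_anti₀ h0 (by linarith)
              _ = lam i / θ := by rw [inv_div]
        have hgoal0 : {o | (∑ i ∈ Finset.range k, X i o / lam i) ≤ t}
            = {ω | (∑ i ∈ Finset.range k, Y i) ω ≤ t} := by
          ext ω; simp only [Set.mem_setOf_eq, Finset.sum_apply]; rfl
        rw [hgoal0]
        have hprodpos : (0:ℝ) ≤ ∏ i ∈ Finset.range k, lam i :=
          Finset.prod_nonneg fun i _ => (hlam i).le
        have hb : (0:ℝ) ≤ (Real.exp 1 * t / k) ^ k * ∏ i ∈ Finset.range k, lam i := by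
          positivity
        rw [ENNReal.le_ofReal_iff_toReal_le (measure_ne_top P _) hb]
        refine hch.trans ?_
        rw [hmgf]
        calc Real.exp (-(-θ) * t) * ∏ i ∈ Finset.range k, (1 - (-θ) / lam i)⁻¹
            ≤ Real.exp (θ * t) * ∏ i ∈ Finset.range k, (lam i / θ) := by
              rw [neg_neg]
              exact mul_le_mul_of_nonneg_left hbd (Real.exp_pos _).le
          _ = (Real.exp 1 * t / k) ^ k * ∏ i ∈ Finset.range k, lam i := by
              rw [Finset.prod_div_distrib, Finset.prod_const, Finset.card_range]
              have hθt : θ * t = (k:ℝ) := by rw [hθ]; field_simp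
              rw [hθt]
              have he1 : Real.exp ((k:ℝ)) = Real.exp 1 ^ k := by
                rw [← Real.exp_nat_mul]; norm_num
              rw [he1, hθ, div_pow, div_pow]
              have hkne : ((k:ℝ))^k ≠ 0 := by positivity
              have htne : t^k ≠ 0 := by positivity
              field_simp
              ring
  · intro lam₀ k t hk hl0 hll hΛt
    set Λ : ℝ := ∑ i ∈ Finset.range k, 1 / lam i with hΛ
    have hk0 : (0:ℝ) < (k:ℝ) := by exact_mod_cast Nat.pos_of_ne_zero (by omega)
    have hΛpos : 0 < Λ := by
      rw [hΛ]
      exact Finset.sum_pos (fun i _ => by have := hlam i; positivity)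
        ⟨0, Finset.mem_range.2 (by omega)⟩
    have htpos : 0 < t := lt_of_lt_of_le hΛpos hΛt
    set θ : ℝ := lam₀ * (t - Λ) / t with hθ
    have htΛ : 0 ≤ t - Λ := by linarith
    have hθ0 : 0 ≤ θ := by rw [hθ]; positivity
    have hgap : lam₀ - θ = lam₀ * Λ / t := by rw [hθ]; field_simp; ring
    have hgappos : 0 < lam₀ - θ := by rw [hgap]; positivity
    have hθlt : ∀ i, θ < lam i := fun i => lt_of_lt_of_le (by linarith) (hll i)
    have hInt : Integrable (fun ω => Real.exp (θ * (∑ i ∈ Finset.range k, Y i) ω)) P := by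
      refine hYindep.integrable_exp_mul_sum hYmeas fun i _ => ?_
      exact integrable_exp_div (hmeas i) (hdist i) (hlam i) (hθlt i)
    have hch := measure_ge_le_exp_mul_mgf (μ := P) (X := ∑ i ∈ Finset.range k, Y i) t hθ0 hInt
    have hmgf : mgf (∑ i ∈ Finset.range k, Y i) P θ
        = ∏ i ∈ Finset.range k, (1 - θ/lam i)⁻¹ := by
      rw [hYindep.mgf_sum hYmeas]
      exact Finset.prod_congr rfl fun i _ => mgf_div (hmeas i) (hdist i) (hlam i) (hθlt i)
    have hxlt : ∀ i, θ / lam i < 1 := fun i => (div_lt_one (hlam i)).2 (hθlt i)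
    have hbd1 : ∏ i ∈ Finset.range k, (1 - θ/lam i)⁻¹
        ≤ Real.exp (∑ i ∈ Finset.range k,
            (θ * (1/lam i) + (θ^2/(2*(lam₀-θ))) * (1/lam i))) := by
      rw [Real.exp_sum]
      refine Finset.prod_le_prod (fun i _ => ?_) (fun i _ => ?_)
      · have h2 := hxlt i
        have h1 : 0 < 1 - θ/lam i := by linarith
        positivity
      · refine le_trans (inv_one_sub_le_exp (by have := hlam i; positivity) (hxlt i)) ?_
        rw [Real.exp_le_exp]
        have hli := hlam i
        have hgi : 0 < lam i - θ := by linarith [hθlt i]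
        have he : (θ/lam i)^2/(2*(1-θ/lam i)) = θ^2/(2*(lam i - θ)) * (1/lam i) := by
          field_simp
        rw [he]
        have hmono : θ^2/(2*(lam i - θ)) ≤ θ^2/(2*(lam₀ - θ)) := by
          apply div_le_div_of_nonneg_left (sq_nonneg θ) (by positivity)
          have := hll i
          linarith
        have h1i : (0:ℝ) ≤ 1/lam i := by positivity
        have h3 := mul_le_mul_of_nonneg_right hmono h1i
        have h4 : θ/lam i = θ * (1/lam i) := by ring
        linarith
    have hsum : ∑ i ∈ Finset.range k, (θ * (1/lam i) + (θ^2/(2*(lam₀-θ))) * (1/lam i))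
        = θ * Λ + θ^2/(2*(lam₀-θ)) * Λ := by
      rw [Finset.sum_add_distrib, ← Finset.mul_sum, ← Finset.mul_sum, hΛ]
    have ht' : t ≠ 0 := htpos.ne'
    have hΛ' : Λ ≠ 0 := hΛpos.ne'
    have hl0' : lam₀ ≠ 0 := hl0.ne'
    have hfinal : -θ * t + (θ * Λ + θ^2/(2*(lam₀-θ)) * Λ)
        = -(lam₀ * (t - Λ)^2 / (2*t)) := by
      rw [hgap, hθ]
      field_simp
      ring
    have hgoal0 : {o | t ≤ ∑ i ∈ Finset.range k, X i o / lam i}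
        = {ω | t ≤ (∑ i ∈ Finset.range k, Y i) ω} := by
      ext ω; simp only [Set.mem_setOf_eq, Finset.sum_apply]; rfl
    rw [hgoal0, ENNReal.le_ofReal_iff_toReal_le (measure_ne_top P _) (Real.exp_pos _).le]
    refine hch.trans ?_
    rw [hmgf]
    calc Real.exp (-θ * t) * ∏ i ∈ Finset.range k, (1 - θ/lam i)⁻¹
        ≤ Real.exp (-θ * t) * Real.exp (∑ i ∈ Finset.range k,
            (θ * (1/lam i) + (θ^2/(2*(lam₀-θ))) * (1/lam i))) :=
          mul_le_mul_of_nonneg_left hbd1 (Real.exp_pos _).le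
      _ = Real.exp (-(lam₀ * (t - Λ)^2 / (2*t))) := by
          rw [hsum, ← Real.exp_add, hfinal]
end
end

section
/- Let X₁, X₂, … be i.i.d. exponential random variables with mean 1, and let λ₁, λ₂, … be positive real numbers. Then for any t ≥ 0 and any integers k > m ≥ 0: ℙ(Σ_{i=1}^k X_i/λ_i ≤ t and Σ_{i=1}^m X_i/λ_i + Σ_{i=k+1}^{2k−m} X_i/λ_i ≤ t) ≤ ((e t)^{2k−m} / ((k−m)^{2k−2m} m^m)) · ∏_{i=1}^{2k−m} λ_i, where 0⁰ is interpreted as 1 when m = 0. -/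
open MeasureTheory ProbabilityTheory Filter
open scoped ENNReal NNReal

noncomputable section

section AuxExpTail
open Real

lemma aux_nat_pow (x y : ℕ) : x ^ x * y ^ y ≤ (x + y) ^ (x + y) := by
  calc x ^ x * y ^ y ≤ (x + y) ^ x * (x + y) ^ y :=
        Nat.mul_le_mul (Nat.pow_le_pow_left (Nat.le_add_right x y) x)
          (Nat.pow_le_pow_left (Nat.le_add_left y x) y)
    _ = (x + y) ^ (x + y) := (pow_add _ _ _).symm

lemma aux_expMeasure_eq : expMeasure 1 = volume.withDensity (exponentialPDF 1) := rfl

lemma aux_pdf_mul (s : ℝ) (hs : s ≤ 0) (x : ℝ) :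
    exponentialPDF 1 x * ENNReal.ofReal (rexp (s * x))
      = ENNReal.ofReal (1 - s)⁻¹ * exponentialPDF (1 - s) x := by
  have h1 : (0:ℝ) < 1 - s := by linarith
  rcases le_or_gt 0 x with hx | hx
  · rw [exponentialPDF_of_nonneg hx, exponentialPDF_of_nonneg hx,
      ← ENNReal.ofReal_mul (by positivity), ← ENNReal.ofReal_mul (by positivity)]
    congr 1
    rw [one_mul, ← Real.exp_add]
    rw [inv_mul_cancel_left₀ h1.ne']
    congr 1
    ring
  · rw [exponentialPDF_of_neg hx, exponentialPDF_of_neg hx, zero_mul, mul_zero]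

lemma aux_lintegral_exp (s : ℝ) (hs : s ≤ 0) :
    ∫⁻ x, ENNReal.ofReal (rexp (s * x)) ∂(expMeasure 1) = ENNReal.ofReal (1 - s)⁻¹ := by
  have h1 : (0:ℝ) < 1 - s := by linarith
  have hpdf : Measurable (exponentialPDF 1) :=
    (measurable_exponentialPDFReal 1).ennreal_ofReal
  have hg : Measurable fun x : ℝ => ENNReal.ofReal (rexp (s * x)) := by
    fun_prop
  rw [aux_expMeasure_eq, lintegral_withDensity_eq_lintegral_mul _ hpdf hg]
  calc ∫⁻ x, (exponentialPDF 1 * fun x => ENNReal.ofReal (rexp (s * x))) x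
      = ∫⁻ x, ENNReal.ofReal (1 - s)⁻¹ * exponentialPDF (1 - s) x := by
        apply lintegral_congr
        intro x
        exact aux_pdf_mul s hs x
    _ = ENNReal.ofReal (1 - s)⁻¹ * ∫⁻ x, exponentialPDF (1 - s) x := by
        rw [lintegral_const_mul' _ _ ENNReal.ofReal_ne_top]
    _ = ENNReal.ofReal (1 - s)⁻¹ := by
        rw [lintegral_exponentialPDF_eq_one h1, mul_one]

lemma aux_integrable_exp (s : ℝ) (hs : s ≤ 0) :
    Integrable (fun x => rexp (s * x)) (expMeasure 1) := by
  refine ⟨(Measurable.aestronglyMeasurable (by fun_prop)), ?_⟩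
  rw [hasFiniteIntegral_iff_ofReal (ae_of_all _ fun x => (exp_pos _).le)]
  rw [aux_lintegral_exp s hs]
  exact ENNReal.ofReal_lt_top

lemma aux_integral_exp (s : ℝ) (hs : s ≤ 0) :
    ∫ x, rexp (s * x) ∂(expMeasure 1) = (1 - s)⁻¹ := by
  have h1 : (0:ℝ) < 1 - s := by linarith
  rw [integral_eq_lintegral_of_nonneg_ae (ae_of_all _ fun x => (exp_pos _).le)
    (Measurable.aestronglyMeasurable (by fun_prop)), aux_lintegral_exp s hs,
    ENNReal.toReal_ofReal (by positivity)]

variable {Ω : Type} [MeasurableSpace Ω] {P : Measure Ω} [IsProbabilityMeasure P]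

lemma aux_integrable_comp {X : Ω → ℝ} (hX : Measurable X)
    (hdist : Measure.map X P = expMeasure 1) (s : ℝ) (hs : s ≤ 0) :
    Integrable (fun ω => rexp (s * X ω)) P := by
  have hg : AEStronglyMeasurable (fun x : ℝ => rexp (s * x)) (Measure.map X P) :=
    Measurable.aestronglyMeasurable (by fun_prop)
  have := (integrable_map_measure hg hX.aemeasurable).mp
    (by rw [hdist]; exact aux_integrable_exp s hs)
  exact this

lemma aux_integral_comp {X : Ω → ℝ} (hX : Measurable X)
    (hdist : Measure.map X P = expMeasure 1) (s : ℝ) (hs : s ≤ 0) :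
    ∫ ω, rexp (s * X ω) ∂P = (1 - s)⁻¹ := by
  have hg : AEStronglyMeasurable (fun x : ℝ => rexp (s * x)) (Measure.map X P) :=
    Measurable.aestronglyMeasurable (by fun_prop)
  rw [← integral_map hX.aemeasurable hg, hdist, aux_integral_exp s hs]

theorem exponential_sum_joint_tail_aux {Ω : Type} [MeasurableSpace Ω] (P : Measure Ω)
    [IsProbabilityMeasure P]
    (X : ℕ → Ω → ℝ) (hmeas : ∀ i, Measurable (X i))
    (hindep : iIndepFun X P)
    (hdist : ∀ i, Measure.map (X i) P = expMeasure 1)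
    (lam : ℕ → ℝ) (hlam : ∀ i, 0 < lam i) :
    ∀ (t : ℝ) (k m : ℕ), 0 ≤ t → m < k →
      P {o | (∑ i ∈ Finset.range k, X i o / lam i) ≤ t ∧
             (∑ i ∈ Finset.range m, X i o / lam i)
               + (∑ i ∈ Finset.Ico k (2 * k - m), X i o / lam i) ≤ t}
        ≤ ENNReal.ofReal
            ((Real.exp 1 * t) ^ (2 * k - m)
              / (((k : ℝ) - m) ^ (2 * k - 2 * m) * (m : ℝ) ^ m)
              * ∏ i ∈ Finset.range (2 * k - m), lam i) := by
  intro t k m ht hmk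
  set n := 2 * k - m with hn
  set E := {o | (∑ i ∈ Finset.range k, X i o / lam i) ≤ t ∧
             (∑ i ∈ Finset.range m, X i o / lam i)
               + (∑ i ∈ Finset.Ico k n, X i o / lam i) ≤ t} with hE
  have hmk' : m ≤ k := hmk.le
  have hkn : k ≤ n := by omega
  have hmn : m ≤ n := by omega
  have hn1 : 1 ≤ n := by omega
  set c : ℕ → ℝ := fun i => (if i < m then 2 else 1) / lam i with hc
  have hcpos : ∀ i, 0 < c i := fun i => by
    simp only [hc]; split
    exacts [div_pos two_pos (hlam i), div_pos one_pos (hlam i)]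
  set Y : ℕ → Ω → ℝ := fun i o => c i * X i o with hY
  have hYmeas : ∀ i, Measurable (Y i) := fun i => (hmeas i).const_mul _
  have hYindep : iIndepFun Y P :=
    hindep.comp (fun i => fun x : ℝ => c i * x) (fun i => measurable_id.const_mul _)
  -- inclusion
  have hsub : E ⊆ {o | (∑ i ∈ Finset.range n, Y i) o ≤ 2 * t} := by
    intro o ho
    obtain ⟨h1, h2⟩ := ho
    simp only [Set.mem_setOf_eq, Finset.sum_apply]
    have e1 : ∑ i ∈ Finset.Ico 0 m, Y i o = 2 * ∑ i ∈ Finset.Ico 0 m, X i o / lam i := by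
      rw [Finset.mul_sum]
      refine Finset.sum_congr rfl fun i hi => ?_
      have him : i < m := (Finset.mem_Ico.mp hi).2
      simp only [hY, hc, if_pos him]
      ring
    have e2 : ∑ i ∈ Finset.Ico m k, Y i o = ∑ i ∈ Finset.Ico m k, X i o / lam i := by
      refine Finset.sum_congr rfl fun i hi => ?_
      have him : ¬ i < m := not_lt.mpr (Finset.mem_Ico.mp hi).1
      simp only [hY, hc, if_neg him]
      ring
    have e3 : ∑ i ∈ Finset.Ico k n, Y i o = ∑ i ∈ Finset.Ico k n, X i o / lam i := by
      refine Finset.sum_congr rfl fun i hi => ?_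
      have him : ¬ i < m := not_lt.mpr (hmk'.trans (Finset.mem_Ico.mp hi).1)
      simp only [hY, hc, if_neg him]
      ring
    have s1 : ∑ i ∈ Finset.range n, Y i o
        = ∑ i ∈ Finset.Ico 0 m, Y i o + ∑ i ∈ Finset.Ico m k, Y i o
          + ∑ i ∈ Finset.Ico k n, Y i o := by
      rw [Finset.range_eq_Ico, ← Finset.sum_Ico_consecutive _ (Nat.zero_le k) hkn,
        ← Finset.sum_Ico_consecutive _ (Nat.zero_le m) hmk']
    have s2 : ∑ i ∈ Finset.range k, X i o / lam i
        = ∑ i ∈ Finset.Ico 0 m, X i o / lam i + ∑ i ∈ Finset.Ico m k, X i o / lam i := by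
      rw [Finset.range_eq_Ico, ← Finset.sum_Ico_consecutive _ (Nat.zero_le m) hmk']
    rw [Finset.range_eq_Ico] at h2
    linarith
  -- Chernoff bound for every θ > 0
  have key : ∀ θ : ℝ, 0 < θ →
      (P E).toReal ≤ rexp (θ * (2 * t)) * ∏ i ∈ Finset.range n, (θ * c i)⁻¹ := by
    intro θ hθ
    have hs : ∀ i, -θ * c i ≤ 0 := fun i => by
      have := hcpos i; nlinarith
    have hint : ∀ i, Integrable (fun ω => rexp (-θ * Y i ω)) P := by
      intro i
      have := aux_integrable_comp (hmeas i) (hdist i) (-θ * c i) (hs i)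
      refine this.congr ?_
      filter_upwards with ω
      simp only [hY]
      ring_nf
    have hmgf_eq : ∀ i, mgf (Y i) P (-θ) = (1 + θ * c i)⁻¹ := by
      intro i
      have : mgf (Y i) P (-θ) = ∫ ω, rexp ((-θ * c i) * X i ω) ∂P := by
        unfold mgf
        congr 1 with ω
        simp only [hY]
        ring_nf
      rw [this, aux_integral_comp (hmeas i) (hdist i) (-θ * c i) (hs i)]
      congr 1
      ring
    have hintsum : Integrable (fun ω => rexp (-θ * (∑ i ∈ Finset.range n, Y i) ω)) P :=
      hYindep.integrable_exp_mul_sum hYmeas (fun i _ => hint i)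
    calc (P E).toReal
        ≤ (P {o | (∑ i ∈ Finset.range n, Y i) o ≤ 2 * t}).toReal :=
          ENNReal.toReal_mono (measure_ne_top _ _) (measure_mono hsub)
      _ ≤ rexp (-(-θ) * (2 * t)) * mgf (∑ i ∈ Finset.range n, Y i) P (-θ) :=
          measure_le_le_exp_mul_mgf (2 * t) (by linarith) hintsum
      _ = rexp (θ * (2 * t)) * ∏ i ∈ Finset.range n, mgf (Y i) P (-θ) := by
          rw [hYindep.mgf_sum hYmeas, neg_neg]
      _ ≤ rexp (θ * (2 * t)) * ∏ i ∈ Finset.range n, (θ * c i)⁻¹ := by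
          apply mul_le_mul_of_nonneg_left _ (exp_pos _).le
          apply Finset.prod_le_prod (fun i _ => mgf_nonneg)
          intro i _
          rw [hmgf_eq i]
          apply inv_anti₀ (mul_pos hθ (hcpos i))
          have := hcpos i
          nlinarith
  -- compute the product
  have hL : 0 < ∏ i ∈ Finset.range n, lam i := Finset.prod_pos fun i _ => hlam i
  have hprodc : ∀ θ : ℝ, 0 < θ → ∏ i ∈ Finset.range n, (θ * c i)⁻¹
      = θ⁻¹ ^ n * ((2:ℝ)⁻¹ ^ m * ∏ i ∈ Finset.range n, lam i) := by
    intro θ hθ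
    have : ∀ i ∈ Finset.range n, (θ * c i)⁻¹ = θ⁻¹ * (c i)⁻¹ := fun i _ => by
      rw [mul_inv]
    rw [Finset.prod_congr rfl this, Finset.prod_mul_distrib, Finset.prod_const,
      Finset.card_range]
    congr 1
    rw [← Finset.prod_range_mul_prod_Ico (fun i => (c i)⁻¹) hmn,
      ← Finset.prod_range_mul_prod_Ico lam hmn]
    have hp1 : ∏ i ∈ Finset.range m, (c i)⁻¹ = (2:ℝ)⁻¹ ^ m * ∏ i ∈ Finset.range m, lam i := by
      rw [show (2:ℝ)⁻¹ ^ m = ∏ _i ∈ Finset.range m, (2:ℝ)⁻¹ by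
          rw [Finset.prod_const, Finset.card_range], ← Finset.prod_mul_distrib]
      refine Finset.prod_congr rfl fun i hi => ?_
      have him : i < m := Finset.mem_range.mp hi
      simp only [hc, if_pos him]
      rw [div_eq_mul_inv, mul_inv, inv_inv]
    have hp2 : ∏ i ∈ Finset.Ico m n, (c i)⁻¹ = ∏ i ∈ Finset.Ico m n, lam i := by
      refine Finset.prod_congr rfl fun i hi => ?_
      have him : ¬ i < m := not_lt.mpr (Finset.mem_Ico.mp hi).1
      simp only [hc, if_neg him]
      rw [one_div, inv_inv]
    rw [hp1, hp2]
    ring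
  -- case t = 0
  rcases eq_or_lt_of_le ht with ht0 | htpos
  · have hE0 : P E = 0 := by
      have hIic : expMeasure 1 (Set.Iic 0) = 0 := by
        rw [aux_expMeasure_eq, withDensity_apply _ measurableSet_Iic,
          setLIntegral_congr (Filter.EventuallyEq.symm Iio_ae_eq_Iic)]
        exact lintegral_exponentialPDF_of_nonpos le_rfl
      have hzero : ∀ i : ℕ, P {o | X i o ≤ 0} = 0 := by
        intro i
        have : {o | X i o ≤ 0} = X i ⁻¹' Set.Iic 0 := rfl
        rw [this, ← Measure.map_apply (hmeas i) measurableSet_Iic, hdist i]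
        exact hIic
      have hsub0 : E ⊆ ⋃ i ∈ Finset.range k, {o | X i o ≤ 0} := by
        intro o ho
        by_contra hcon
        simp only [Set.mem_iUnion, Finset.mem_range, Set.mem_setOf_eq, not_exists,
          not_le] at hcon
        have hpos : 0 < ∑ i ∈ Finset.range k, X i o / lam i :=
          Finset.sum_pos
            (fun i hi => div_pos (hcon i (Finset.mem_range.mp hi)) (hlam i))
            ⟨0, Finset.mem_range.mpr (by omega)⟩
        have h1 := ho.1
        linarith [ht0]
      refine measure_mono_null hsub0 ?_
      refine le_antisymm ((measure_biUnion_finset_le _ _).trans ?_) zero_le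
      simp [hzero]
    rw [hE0]
    exact zero_le
  -- case t > 0
  · set A := k - m with hA
    have hA1 : 1 ≤ A := by omega
    have hnA : n = 2 * A + m := by omega
    have hApos : (0:ℝ) < (A:ℝ) := by exact_mod_cast Nat.pos_of_ne_zero (by omega)
    have hnpos : (0:ℝ) < (n:ℝ) := by exact_mod_cast Nat.pos_of_ne_zero (by omega)
    have hmpos : (0:ℝ) < (m:ℝ) ^ m := by
      rcases Nat.eq_zero_or_pos m with h | h
      · simp [h]
      · have : (0:ℝ) < (m:ℝ) := by exact_mod_cast h
        positivity
    have hDpos : (0:ℝ) < (A:ℝ) ^ (2 * A) * (m:ℝ) ^ m := by positivity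
    set θ : ℝ := (n:ℝ) / (2 * t) with hθdef
    have hθ : 0 < θ := by positivity
    have hkey2 : (2:ℝ) ^ (2 * A) * ((A:ℝ) ^ (2 * A) * (m:ℝ) ^ m) ≤ (n:ℝ) ^ n := by
      have h := aux_nat_pow (2 * A) m
      have h' : (((2 * A) ^ (2 * A) * m ^ m : ℕ) : ℝ) ≤ (((2 * A + m) ^ (2 * A + m) : ℕ) : ℝ) := by
        exact_mod_cast h
      push_cast at h'
      calc (2:ℝ) ^ (2 * A) * ((A:ℝ) ^ (2 * A) * (m:ℝ) ^ m)
          = ((2:ℝ) * A) ^ (2 * A) * (m:ℝ) ^ m := by rw [mul_pow]; ring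
        _ ≤ ((2:ℝ) * A + m) ^ (2 * A + m) := by exact_mod_cast h'
        _ = (n:ℝ) ^ n := by rw [hnA]; push_cast; ring
    have hstep : θ⁻¹ ^ n * (2:ℝ)⁻¹ ^ m ≤ t ^ n / ((A:ℝ) ^ (2 * A) * (m:ℝ) ^ m) := by
      have hθinv : θ⁻¹ = 2 * t / (n:ℝ) := by
        rw [hθdef]
        field_simp
      rw [hθinv, div_pow,
        show (2 * t) ^ n / (n:ℝ) ^ n * (2:ℝ)⁻¹ ^ m = ((2 * t) ^ n * (2:ℝ)⁻¹ ^ m) / (n:ℝ) ^ n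
          from by ring,
        div_le_div_iff₀ (by positivity) hDpos]
      have h2n : (2:ℝ) ^ n * (2:ℝ)⁻¹ ^ m = 2 ^ (2 * A) := by
        rw [hnA, pow_add, mul_assoc, ← mul_pow]
        norm_num
      calc (2 * t) ^ n * (2:ℝ)⁻¹ ^ m * ((A:ℝ) ^ (2 * A) * (m:ℝ) ^ m)
          = t ^ n * ((2:ℝ) ^ n * (2:ℝ)⁻¹ ^ m * ((A:ℝ) ^ (2 * A) * (m:ℝ) ^ m)) := by
            rw [mul_pow]; ring
        _ = t ^ n * ((2:ℝ) ^ (2 * A) * ((A:ℝ) ^ (2 * A) * (m:ℝ) ^ m)) := by rw [h2n]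
        _ ≤ t ^ n * (n:ℝ) ^ n := by
            apply mul_le_mul_of_nonneg_left hkey2 (by positivity)
    have hexpn : rexp (θ * (2 * t)) = rexp 1 ^ n := by
      have : θ * (2 * t) = (n:ℝ) := by
        rw [hθdef]; field_simp
      rw [this, ← Real.exp_nat_mul, mul_one]
    have hfinal : rexp (θ * (2 * t)) * (θ⁻¹ ^ n * ((2:ℝ)⁻¹ ^ m * ∏ i ∈ Finset.range n, lam i))
        ≤ (rexp 1 * t) ^ n / ((A:ℝ) ^ (2 * A) * (m:ℝ) ^ m) * ∏ i ∈ Finset.range n, lam i := by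
      rw [hexpn, mul_pow]
      calc rexp 1 ^ n * (θ⁻¹ ^ n * ((2:ℝ)⁻¹ ^ m * ∏ i ∈ Finset.range n, lam i))
          = rexp 1 ^ n * (θ⁻¹ ^ n * (2:ℝ)⁻¹ ^ m) * ∏ i ∈ Finset.range n, lam i := by ring
        _ ≤ rexp 1 ^ n * (t ^ n / ((A:ℝ) ^ (2 * A) * (m:ℝ) ^ m)) * ∏ i ∈ Finset.range n, lam i := by
            apply mul_le_mul_of_nonneg_right _ hL.le
            exact mul_le_mul_of_nonneg_left hstep (by positivity)
        _ = rexp 1 ^ n * t ^ n / ((A:ℝ) ^ (2 * A) * (m:ℝ) ^ m) * ∏ i ∈ Finset.range n, lam i := by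
            ring
    have hbound := (key θ hθ).trans_eq (by rw [hprodc θ hθ])
    have hcastA : ((k:ℝ) - m) = (A:ℝ) := by
      rw [hA, Nat.cast_sub hmk']
    have hexpA : 2 * k - 2 * m = 2 * A := by omega
    rw [hcastA, hexpA]
    rw [← ENNReal.ofReal_toReal (measure_ne_top P E)]
    exact ENNReal.ofReal_le_ofReal (hbound.trans hfinal)

end AuxExpTail

/-- **Joint lower-tail estimate for overlapping weighted sums of exponentials**
(Lemma 2.2). Let `X₁, X₂, …` be i.i.d. mean-one exponential random variables and
`λ₁, λ₂, … > 0`.  Then for any `t ≥ 0` and integers `k > m ≥ 0`,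
`ℙ(Σᵢ₌₁ᵏ Xᵢ/λᵢ ≤ t, Σᵢ₌₁ᵐ Xᵢ/λᵢ + Σᵢ₌ₖ₊₁^{2k-m} Xᵢ/λᵢ ≤ t)
  ≤ ((et)^{2k-m}/((k-m)^{2k-2m} m^m)) ∏ᵢ₌₁^{2k-m} λᵢ`,
with `0⁰ = 1` when `m = 0` (indices here run over `Finset.range`). -/
theorem exponential_sum_joint_tail {Ω : Type} [MeasurableSpace Ω] (P : Measure Ω)
    [IsProbabilityMeasure P]
    (X : ℕ → Ω → ℝ) (hmeas : ∀ i, Measurable (X i))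
    (hindep : iIndepFun X P)
    (hdist : ∀ i, Measure.map (X i) P = expMeasure 1)
    (lam : ℕ → ℝ) (hlam : ∀ i, 0 < lam i) :
    ∀ (t : ℝ) (k m : ℕ), 0 ≤ t → m < k →
      P {o | (∑ i ∈ Finset.range k, X i o / lam i) ≤ t ∧
             (∑ i ∈ Finset.range m, X i o / lam i)
               + (∑ i ∈ Finset.Ico k (2 * k - m), X i o / lam i) ≤ t}
        ≤ ENNReal.ofReal
            ((Real.exp 1 * t) ^ (2 * k - m)
              / (((k : ℝ) - m) ^ (2 * k - 2 * m) * (m : ℝ) ^ m)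
              * ∏ i ∈ Finset.range (2 * k - m), lam i) := by
  exact exponential_sum_joint_tail_aux P X hmeas hindep hdist lam hlam
end
end

section
/- Fix a dimension d ≥ 1 and let ‖·‖₁ be the ℓ¹-norm on ℤ^d. For any α, β > 0 there exists a constant c > 0 depending only on α, β, and d such that for every x ∈ ℤ^d \ {0}: (a) if 0 < α < d, 0 < β < d, and α + β > d, then Σ_{y ∈ ℤ^d, y ≠ 0, y ≠ x} ‖y‖₁^{−β} ‖x−y‖₁^{−α} ≤ c ‖x‖₁^{d−β−α}; (b) if α > d, then Σ_{y ∈ ℤ^d, y ≠ 0, y ≠ x} ‖y‖₁^{−α} ‖x−y‖₁^{−α} ≤ c ‖x‖₁^{−α}. -/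
open MeasureTheory Filter Set
open scoped ENNReal NNReal

noncomputable section

/-- The ℓ¹-norm of a lattice point of `ℤ^d`, as a real number. -/
def l1 {d : ℕ} (x : Fin d → ℤ) : ℝ := ∑ i, |(x i : ℝ)|

namespace PL
variable {d : ℕ}

def Nn (y : Fin d → ℤ) : ℕ := ∑ i, (y i).natAbs

lemma l1_eq (y : Fin d → ℤ) : l1 y = (Nn y : ℝ) := by
  unfold l1 Nn
  push_cast
  congr 1
  ext i
  rw [Nat.cast_natAbs]
  norm_cast

lemma Nn_pos {y : Fin d → ℤ} (hy : y ≠ 0) : 1 ≤ Nn y := by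
  rcases Function.ne_iff.mp hy with ⟨i, hi⟩
  have : 1 ≤ (y i).natAbs := by
    have := Int.natAbs_pos.mpr hi
    omega
  calc 1 ≤ (y i).natAbs := this
    _ ≤ Nn y := Finset.single_le_sum (f := fun i => (y i).natAbs) (fun _ _ => Nat.zero_le _) (Finset.mem_univ i)

lemma Nn_triangle (x y : Fin d → ℤ) : Nn x ≤ Nn (x - y) + Nn y := by
  unfold Nn
  rw [← Finset.sum_add_distrib]
  apply Finset.sum_le_sum
  intro i _
  have : x i = (x - y) i + y i := by simp
  rw [this]
  exact Int.natAbs_add_le _ _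

def ball (b : ℕ) : Finset (Fin d → ℤ) := Fintype.piFinset (fun _ => Finset.Icc (-(b:ℤ)) b)

lemma mem_ball {b : ℕ} {y : Fin d → ℤ} (h : Nn y ≤ b) : y ∈ ball (d := d) b := by
  rw [ball, Fintype.mem_piFinset]
  intro i
  rw [Finset.mem_Icc]
  have : (y i).natAbs ≤ b := le_trans (Finset.single_le_sum (f := fun i => (y i).natAbs) (fun _ _ => Nat.zero_le _) (Finset.mem_univ i)) h
  omega

lemma card_ball (b : ℕ) : (ball (d := d) b).card = (2 * b + 1) ^ d := by
  simp [ball, Fintype.card_piFinset]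
  congr 1
  omega

/-- Bound a tsum supported on a ball by count times sup. -/
lemma block_bound (f : (Fin d → ℤ) → ℝ≥0∞) (b : ℕ) (c : ℝ≥0∞)
    (hsupp : ∀ y, f y ≠ 0 → Nn y ≤ b) (hle : ∀ y, f y ≤ c) :
    ∑' y, f y ≤ ((2 * b + 1) ^ d : ℕ) * c := by
  have h0 : ∀ y ∉ ball (d := d) b, f y = 0 := by
    intro y hy
    by_contra h
    exact hy (mem_ball (hsupp y h))
  rw [tsum_eq_sum h0]
  calc ∑ y ∈ ball (d := d) b, f y ≤ ∑ _y ∈ ball (d := d) b, c := Finset.sum_le_sum (fun y _ => hle y)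
    _ = ((2 * b + 1) ^ d : ℕ) * c := by rw [Finset.sum_const, card_ball]; simp [nsmul_eq_mul]


lemma rpow_anti {a b : ℝ≥0∞} (hab : a ≤ b) {c : ℝ} (hc : c ≤ 0) : b ^ c ≤ a ^ c := by
  rw [← neg_neg c, ENNReal.rpow_neg a, ENNReal.rpow_neg b]
  exact ENNReal.inv_le_inv.mpr (ENNReal.rpow_le_rpow hab (neg_nonneg.mpr hc))

lemma two_rpow_ne_top (t : ℝ) : (2:ℝ≥0∞) ^ t ≠ ⊤ := by
  rcases le_or_gt 0 t with h | h
  · exact ENNReal.rpow_ne_top_of_nonneg h (by norm_num)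
  · rw [show t = -(-t) by ring, ENNReal.rpow_neg]
    simpa using (ENNReal.rpow_pos (x := (2:ℝ≥0∞)) (by norm_num) (by norm_num) (p := -t)).ne'

lemma two_rpow_ne_zero (t : ℝ) : (2:ℝ≥0∞) ^ t ≠ 0 :=
  (ENNReal.rpow_pos (by norm_num) (by norm_num)).ne'

lemma blockEst (γ : ℝ) (hγ : 0 ≤ γ) (k : ℕ) (f : (Fin d → ℤ) → ℝ≥0∞)
    (h : ∀ y, f y ≠ 0 → 1 ≤ Nn y ∧ Nat.log 2 (Nn y) = k ∧ f y ≤ (Nn y : ℝ≥0∞) ^ (-γ)) :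
    ∑' y, f y ≤ (2:ℝ≥0∞) ^ (3 * (d:ℝ)) * ((2:ℝ≥0∞) ^ ((d:ℝ) - γ)) ^ k := by
  have hb : ∀ y, f y ≠ 0 → Nn y ≤ 2 ^ (k + 1) := by
    intro y hy
    obtain ⟨h1, h2, _⟩ := h y hy
    have := Nat.lt_pow_succ_log_self (b := 2) (by norm_num) (Nn y)
    rw [h2] at this
    omega
  have hc : ∀ y, f y ≤ ((2 ^ k : ℕ) : ℝ≥0∞) ^ (-γ) := by
    intro y
    by_cases hy : f y = 0
    · simp [hy]
    obtain ⟨h1, h2, h3⟩ := h y hy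
    refine h3.trans (rpow_anti ?_ (by linarith))
    have := Nat.pow_log_le_self 2 (x := Nn y) (by omega)
    rw [h2] at this
    exact_mod_cast this
  refine (block_bound f (2 ^ (k + 1)) _ hb hc).trans ?_
  have h1 : ((2 * 2 ^ (k + 1) + 1) ^ d : ℕ) ≤ ((2:ℝ≥0∞) ^ (((k:ℝ) + 3) * d)) := by
    have h2 : ((2 * 2 ^ (k + 1) + 1 : ℕ) : ℝ≥0∞) ≤ (2:ℝ≥0∞) ^ ((k:ℝ) + 3) := by
      have : ((k:ℝ) + 3) = ((k + 3 : ℕ) : ℝ) := by push_cast; ring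
      rw [this, ENNReal.rpow_natCast]
      have hn : (2 * 2 ^ (k + 1) + 1 : ℕ) ≤ 2 ^ (k + 3) := by
        have := Nat.one_le_two_pow (n := k)
        ring_nf
        omega
      calc ((2 * 2 ^ (k + 1) + 1 : ℕ) : ℝ≥0∞) ≤ ((2 ^ (k+3) : ℕ) : ℝ≥0∞) := by exact_mod_cast hn
        _ = (2:ℝ≥0∞) ^ (k+3) := by push_cast; ring
    calc (((2 * 2 ^ (k + 1) + 1) ^ d : ℕ) : ℝ≥0∞) = ((2 * 2 ^ (k + 1) + 1 : ℕ) : ℝ≥0∞) ^ (d:ℝ) := by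
          rw [ENNReal.rpow_natCast]; push_cast; ring
      _ ≤ ((2:ℝ≥0∞) ^ ((k:ℝ) + 3)) ^ (d:ℝ) := ENNReal.rpow_le_rpow h2 (by positivity)
      _ = (2:ℝ≥0∞) ^ (((k:ℝ) + 3) * d) := by rw [← ENNReal.rpow_mul]
  have h2 : ((2 ^ k : ℕ) : ℝ≥0∞) ^ (-γ) = (2:ℝ≥0∞) ^ ((k:ℝ) * (-γ)) := by
    have : ((2 ^ k : ℕ) : ℝ≥0∞) = (2:ℝ≥0∞) ^ (k:ℝ) := by
      rw [ENNReal.rpow_natCast]; push_cast; ring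
    rw [this, ← ENNReal.rpow_mul]
  calc ((2 * 2 ^ (k + 1) + 1) ^ d : ℕ) * ((2 ^ k : ℕ) : ℝ≥0∞) ^ (-γ)
      ≤ (2:ℝ≥0∞) ^ (((k:ℝ) + 3) * d) * (2:ℝ≥0∞) ^ ((k:ℝ) * (-γ)) := by
        rw [h2]; exact mul_le_mul_left h1 _
    _ = (2:ℝ≥0∞) ^ (((k:ℝ) + 3) * d + (k:ℝ) * (-γ)) := by
        rw [← ENNReal.rpow_add _ _ (by norm_num) (by norm_num)]
    _ = (2:ℝ≥0∞) ^ (3 * (d:ℝ) + (k:ℝ) * ((d:ℝ) - γ)) := by ring_nf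
    _ = (2:ℝ≥0∞) ^ (3 * (d:ℝ)) * ((2:ℝ≥0∞) ^ ((d:ℝ) - γ)) ^ k := by
        rw [ENNReal.rpow_add _ _ (by norm_num) (by norm_num), ← ENNReal.rpow_natCast ((2:ℝ≥0∞) ^ ((d:ℝ) - γ)) k,
          ← ENNReal.rpow_mul]
        ring_nf

lemma fiber_decomp (f : (Fin d → ℤ) → ℝ≥0∞) (φ : (Fin d → ℤ) → ℕ) :
    ∑' y, f y = ∑' (k : ℕ), ∑' (y : {y : Fin d → ℤ // φ y = k}), f ↑y := by
  rw [← (Equiv.sigmaFiberEquiv φ).tsum_eq f]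
  exact ENNReal.tsum_sigma (fun k (y : {y : Fin d → ℤ // φ y = k}) => f ↑y)

lemma tail_dyadic (γ : ℝ) (hγ0 : 0 ≤ γ) (f : (Fin d → ℤ) → ℝ≥0∞) (K : ℕ)
    (h : ∀ y, f y ≠ 0 → 1 ≤ Nn y ∧ K ≤ Nat.log 2 (Nn y) ∧ f y ≤ (Nn y : ℝ≥0∞) ^ (-γ)) :
    ∑' y, f y ≤ (2:ℝ≥0∞) ^ (3 * (d:ℝ)) * (1 - (2:ℝ≥0∞) ^ ((d:ℝ) - γ))⁻¹
      * ((2:ℝ≥0∞) ^ ((d:ℝ) - γ)) ^ K := by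
  set r : ℝ≥0∞ := (2:ℝ≥0∞) ^ ((d:ℝ) - γ) with hr
  set φ : (Fin d → ℤ) → ℕ := fun y => Nat.log 2 (Nn y) with hφ
  set g : ℕ → ℝ≥0∞ := fun k => ∑' (y : {y : Fin d → ℤ // φ y = k}), f ↑y with hg
  have hdecomp := fiber_decomp f φ
  have hgz : ∀ k, k < K → g k = 0 := by
    intro k hk
    rw [hg]
    apply ENNReal.tsum_eq_zero.mpr
    rintro ⟨y, hyk⟩
    by_contra h0
    obtain ⟨_, h2, _⟩ := h y h0
    simp only [hφ] at hyk
    omega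
  have hgle : ∀ k, g k ≤ (2:ℝ≥0∞) ^ (3 * (d:ℝ)) * r ^ k := by
    intro k
    rw [hg]
    simp only
    have : (∑' (y : {y : Fin d → ℤ // φ y = k}), f ↑y)
        = ∑' (y : Fin d → ℤ), Set.indicator {y | φ y = k} f y := tsum_subtype {y | φ y = k} f
    rw [this]
    apply blockEst γ hγ0 k
    intro y hy
    have hy' : f y ≠ 0 := by
      by_contra h0
      apply hy
      simp only [Set.indicator]
      split <;> simp [h0]
    obtain ⟨h1, h2, h3⟩ := h y hy'
    refine ⟨h1, ?_, ?_⟩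
    · by_contra hne
      apply hy
      simp only [Set.indicator, Set.mem_setOf_eq]
      split
      · next hmem => exact absurd hmem hne
      · rfl
    · exact le_trans (Set.indicator_le_self _ _ y) h3
  calc ∑' y, f y = ∑' k, g k := hdecomp
    _ = ∑' (j : ℕ), g (K + j) := by
        refine (Function.Injective.tsum_eq (fun a b hab => by simpa using hab : Function.Injective (K + ·)) ?_).symm
        intro k hk
        rcases le_or_gt K k with h' | h'
        · exact ⟨k - K, by simp; omega⟩
        · exact absurd (hgz k h') hk
    _ ≤ ∑' (j : ℕ), (2:ℝ≥0∞) ^ (3 * (d:ℝ)) * r ^ K * r ^ j := by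
        apply ENNReal.tsum_le_tsum
        intro j
        rw [mul_assoc, ← pow_add]
        exact hgle (K + j)
    _ = (2:ℝ≥0∞) ^ (3 * (d:ℝ)) * r ^ K * (1 - r)⁻¹ := by
        rw [ENNReal.tsum_mul_left, ENNReal.tsum_geometric]
    _ = (2:ℝ≥0∞) ^ (3 * (d:ℝ)) * (1 - r)⁻¹ * r ^ K := by ring

lemma ball_dyadic (β : ℝ) (hβ0 : 0 ≤ β) (f : (Fin d → ℤ) → ℝ≥0∞) (K : ℕ)
    (h : ∀ y, f y ≠ 0 → 1 ≤ Nn y ∧ Nat.log 2 (Nn y) ≤ K ∧ f y ≤ (Nn y : ℝ≥0∞) ^ (-β)) :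
    ∑' y, f y ≤ (2:ℝ≥0∞) ^ (3 * (d:ℝ)) * (1 - (2:ℝ≥0∞) ^ (β - (d:ℝ)))⁻¹
      * ((2:ℝ≥0∞) ^ ((d:ℝ) - β)) ^ K := by
  set s : ℝ≥0∞ := (2:ℝ≥0∞) ^ ((d:ℝ) - β) with hs
  have hs0 : s ≠ 0 := two_rpow_ne_zero _
  have hst : s ≠ ⊤ := two_rpow_ne_top _
  have hsinv : s⁻¹ = (2:ℝ≥0∞) ^ (β - (d:ℝ)) := by
    rw [hs, ← ENNReal.rpow_neg]; congr 1; ring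
  set φ : (Fin d → ℤ) → ℕ := fun y => Nat.log 2 (Nn y) with hφ
  set g : ℕ → ℝ≥0∞ := fun k => ∑' (y : {y : Fin d → ℤ // φ y = k}), f ↑y with hg
  have hdecomp := fiber_decomp f φ
  have hgz : ∀ k, K < k → g k = 0 := by
    intro k hk
    rw [hg]
    apply ENNReal.tsum_eq_zero.mpr
    rintro ⟨y, hyk⟩
    by_contra h0
    obtain ⟨_, h2, _⟩ := h y h0
    simp only [hφ] at hyk
    omega
  have hgle : ∀ k, g k ≤ (2:ℝ≥0∞) ^ (3 * (d:ℝ)) * s ^ k := by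
    intro k
    rw [hg]
    simp only
    have : (∑' (y : {y : Fin d → ℤ // φ y = k}), f ↑y)
        = ∑' (y : Fin d → ℤ), Set.indicator {y | φ y = k} f y := tsum_subtype {y | φ y = k} f
    rw [this]
    apply blockEst β hβ0 k
    intro y hy
    have hy' : f y ≠ 0 := by
      by_contra h0
      apply hy
      simp only [Set.indicator]
      split <;> simp [h0]
    obtain ⟨h1, h2, h3⟩ := h y hy'
    refine ⟨h1, ?_, ?_⟩
    · by_contra hne
      apply hy
      simp only [Set.indicator, Set.mem_setOf_eq]
      split
      · next hmem => exact absurd hmem hne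
      · rfl
    · exact le_trans (Set.indicator_le_self _ _ y) h3
  have hpow : ∀ j, j ≤ K → s ^ (K - j) = s ^ K * (s⁻¹) ^ j := by
    intro j hj
    rw [← ENNReal.inv_pow, ← div_eq_mul_inv]
    rw [ENNReal.eq_div_iff (pow_ne_zero _ hs0) (ENNReal.pow_ne_top hst)]
    rw [← pow_add]
    congr 1
    omega
  calc ∑' y, f y = ∑' k, g k := hdecomp
    _ = ∑ k ∈ Finset.range (K + 1), g k := by
        apply tsum_eq_sum
        intro k hk
        exact hgz k (by simpa using hk)
    _ ≤ ∑ k ∈ Finset.range (K + 1), (2:ℝ≥0∞) ^ (3 * (d:ℝ)) * s ^ k :=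
        Finset.sum_le_sum (fun k _ => hgle k)
    _ = (2:ℝ≥0∞) ^ (3 * (d:ℝ)) * ∑ k ∈ Finset.range (K + 1), s ^ k := by
        rw [Finset.mul_sum]
    _ = (2:ℝ≥0∞) ^ (3 * (d:ℝ)) * ∑ j ∈ Finset.range (K + 1), s ^ (K - j) := by
        congr 1
        have := Finset.sum_range_reflect (fun k => s ^ k) (K + 1)
        simpa using this.symm
    _ ≤ (2:ℝ≥0∞) ^ (3 * (d:ℝ)) * ∑ j ∈ Finset.range (K + 1), s ^ K * (s⁻¹) ^ j := by
        apply mul_le_mul_right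
        apply Finset.sum_le_sum
        intro j hj
        rw [hpow j (by simpa using Nat.lt_succ_iff.mp (Finset.mem_range.mp hj))]
    _ ≤ (2:ℝ≥0∞) ^ (3 * (d:ℝ)) * (s ^ K * ∑' (j : ℕ), (s⁻¹) ^ j) := by
        apply mul_le_mul_right
        rw [← Finset.mul_sum]
        exact mul_le_mul_right (ENNReal.sum_le_tsum _) _
    _ = (2:ℝ≥0∞) ^ (3 * (d:ℝ)) * (1 - (2:ℝ≥0∞) ^ (β - (d:ℝ)))⁻¹ * s ^ K := by
        rw [ENNReal.tsum_geometric, hsinv]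
        ring

lemma tail_sum (γ : ℝ) (hγ0 : 0 ≤ γ) (hγd : (d:ℝ) ≤ γ) (m : ℕ) (hm : 1 ≤ m)
    (f : (Fin d → ℤ) → ℝ≥0∞)
    (h : ∀ y, f y ≠ 0 → m ≤ Nn y ∧ f y ≤ (Nn y : ℝ≥0∞) ^ (-γ)) :
    ∑' y, f y ≤ (2:ℝ≥0∞) ^ (3 * (d:ℝ)) * (1 - (2:ℝ≥0∞) ^ ((d:ℝ) - γ))⁻¹
      * (2:ℝ≥0∞) ^ (γ - (d:ℝ)) * (m:ℝ≥0∞) ^ ((d:ℝ) - γ) := by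
  set K : ℕ := Nat.log 2 m with hK
  have step := tail_dyadic γ hγ0 f K (by
    intro y hy
    obtain ⟨h1, h2⟩ := h y hy
    exact ⟨by omega, by rw [hK]; exact Nat.log_mono_right h1, h2⟩)
  have hrK : ((2:ℝ≥0∞) ^ ((d:ℝ) - γ)) ^ K = (2:ℝ≥0∞) ^ ((K:ℝ) * ((d:ℝ) - γ)) := by
    rw [← ENNReal.rpow_natCast ((2:ℝ≥0∞) ^ ((d:ℝ) - γ)) K, ← ENNReal.rpow_mul]
    ring_nf
  have hm2 : (m:ℝ≥0∞) ≤ (2:ℝ≥0∞) ^ ((K:ℝ) + 1) := by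
    have h1 : m < 2 ^ (K + 1) := by
      have := Nat.lt_pow_succ_log_self (b := 2) (by norm_num) m
      simpa [hK] using this
    have : ((K:ℝ) + 1) = ((K + 1 : ℕ) : ℝ) := by push_cast; ring
    rw [this, ENNReal.rpow_natCast]
    calc (m:ℝ≥0∞) ≤ ((2 ^ (K+1) : ℕ) : ℝ≥0∞) := by exact_mod_cast h1.le
      _ = (2:ℝ≥0∞) ^ (K+1) := by push_cast; ring
  have hmain : ((2:ℝ≥0∞) ^ ((d:ℝ) - γ)) ^ K ≤ (2:ℝ≥0∞) ^ (γ - (d:ℝ)) * (m:ℝ≥0∞) ^ ((d:ℝ) - γ) := by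
    have e1 : ((2:ℝ≥0∞) ^ ((d:ℝ) - γ)) ^ K
        = (2:ℝ≥0∞) ^ (((K:ℝ) + 1) * ((d:ℝ) - γ) + (γ - (d:ℝ))) := by
      rw [hrK]
      congr 1
      ring
    have e2 : (2:ℝ≥0∞) ^ (((K:ℝ) + 1) * ((d:ℝ) - γ) + (γ - (d:ℝ)))
        = ((2:ℝ≥0∞) ^ ((K:ℝ) + 1)) ^ ((d:ℝ) - γ) * (2:ℝ≥0∞) ^ (γ - (d:ℝ)) := by
      rw [ENNReal.rpow_add _ _ (by norm_num) (by norm_num), ← ENNReal.rpow_mul]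
    rw [e1, e2, mul_comm]
    exact mul_le_mul_right (rpow_anti hm2 (by linarith)) _
  refine step.trans ?_
  calc (2:ℝ≥0∞) ^ (3 * (d:ℝ)) * (1 - (2:ℝ≥0∞) ^ ((d:ℝ) - γ))⁻¹ * ((2:ℝ≥0∞) ^ ((d:ℝ) - γ)) ^ K
      ≤ (2:ℝ≥0∞) ^ (3 * (d:ℝ)) * (1 - (2:ℝ≥0∞) ^ ((d:ℝ) - γ))⁻¹
        * ((2:ℝ≥0∞) ^ (γ - (d:ℝ)) * (m:ℝ≥0∞) ^ ((d:ℝ) - γ)) := mul_le_mul_right hmain _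
    _ = (2:ℝ≥0∞) ^ (3 * (d:ℝ)) * (1 - (2:ℝ≥0∞) ^ ((d:ℝ) - γ))⁻¹
        * (2:ℝ≥0∞) ^ (γ - (d:ℝ)) * (m:ℝ≥0∞) ^ ((d:ℝ) - γ) := by ring

lemma ball_sum (β : ℝ) (hβ0 : 0 ≤ β) (hβd : β ≤ (d:ℝ)) (b : ℕ) (hb : 1 ≤ b)
    (f : (Fin d → ℤ) → ℝ≥0∞)
    (h : ∀ y, f y ≠ 0 → 1 ≤ Nn y ∧ Nn y ≤ b ∧ f y ≤ (Nn y : ℝ≥0∞) ^ (-β)) :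
    ∑' y, f y ≤ (2:ℝ≥0∞) ^ (3 * (d:ℝ)) * (1 - (2:ℝ≥0∞) ^ (β - (d:ℝ)))⁻¹
      * (b:ℝ≥0∞) ^ ((d:ℝ) - β) := by
  set K : ℕ := Nat.log 2 b with hK
  have step := ball_dyadic β hβ0 f K (by
    intro y hy
    obtain ⟨h1, h2, h3⟩ := h y hy
    exact ⟨h1, by rw [hK]; exact Nat.log_mono_right h2, h3⟩)
  refine step.trans ?_
  apply mul_le_mul_right
  have h2K : ((2 ^ K : ℕ) : ℝ≥0∞) ≤ (b:ℝ≥0∞) := by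
    exact_mod_cast Nat.pow_log_le_self 2 (by omega)
  calc ((2:ℝ≥0∞) ^ ((d:ℝ) - β)) ^ K = (((2:ℝ≥0∞) ^ K)) ^ ((d:ℝ) - β) := by
        rw [← ENNReal.rpow_natCast ((2:ℝ≥0∞) ^ ((d:ℝ) - β)) K, ← ENNReal.rpow_mul,
          ← ENNReal.rpow_natCast (2:ℝ≥0∞) K, ← ENNReal.rpow_mul]
        ring_nf
    _ ≤ (b:ℝ≥0∞) ^ ((d:ℝ) - β) := by
        apply ENNReal.rpow_le_rpow _ (by linarith)
        calc ((2:ℝ≥0∞) ^ K) = ((2 ^ K : ℕ) : ℝ≥0∞) := by push_cast; ring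
          _ ≤ (b:ℝ≥0∞) := h2K

lemma nat_rpow_anti {a b : ℕ} (h : a ≤ b) {c : ℝ} (hc : c ≤ 0) :
    (b:ℝ≥0∞) ^ c ≤ (a:ℝ≥0∞) ^ c :=
  rpow_anti (by exact_mod_cast h) hc

lemma half_bound {X m : ℕ} (h : m ≤ 2 * X) {a : ℝ} (ha : 0 ≤ a) :
    (X:ℝ≥0∞) ^ (-a) ≤ (2:ℝ≥0∞) ^ a * (m:ℝ≥0∞) ^ (-a) := by
  have h2X : (m:ℝ≥0∞) ≤ (2:ℝ≥0∞) * (X:ℝ≥0∞) := by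
    calc (m:ℝ≥0∞) ≤ ((2 * X : ℕ) : ℝ≥0∞) := by exact_mod_cast h
      _ = (2:ℝ≥0∞) * (X:ℝ≥0∞) := by push_cast; ring
  have e : (X:ℝ≥0∞) ^ (-a) = (2:ℝ≥0∞) ^ a * ((2:ℝ≥0∞) * (X:ℝ≥0∞)) ^ (-a) := by
    rw [ENNReal.mul_rpow_of_ne_top (by norm_num) (ENNReal.natCast_ne_top X),
      ← mul_assoc, ← ENNReal.rpow_add _ _ (by norm_num) (by norm_num)]
    simp
  rw [e]
  exact mul_le_mul_right (rpow_anti h2X (by linarith)) _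

lemma sub_ne_zero_of_ne' {x y : Fin d → ℤ} (h : y ≠ x) : x - y ≠ 0 :=
  sub_ne_zero.mpr (Ne.symm h)

lemma term_eq (x : Fin d → ℤ) {y : Fin d → ℤ} (hy0 : y ≠ 0) (hyx : y ≠ x) (a b : ℝ) :
    ENNReal.ofReal (l1 y ^ (-a) * l1 (x - y) ^ (-b))
      = (Nn y : ℝ≥0∞) ^ (-a) * (Nn (x - y) : ℝ≥0∞) ^ (-b) := by
  have h1 : (0:ℝ) < l1 y := by
    rw [l1_eq]
    exact_mod_cast Nn_pos hy0
  have h2 : (0:ℝ) < l1 (x - y) := by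
    rw [l1_eq]
    exact_mod_cast Nn_pos (sub_ne_zero_of_ne' hyx)
  rw [ENNReal.ofReal_mul (Real.rpow_nonneg h1.le _),
    ← ENNReal.ofReal_rpow_of_pos h1, ← ENNReal.ofReal_rpow_of_pos h2,
    l1_eq, l1_eq, ENNReal.ofReal_natCast, ENNReal.ofReal_natCast]

open scoped Classical in
lemma partA (α β : ℝ) (hα : 0 < α) (hβ : 0 < β) (hαd : α < d) (hβd : β < d)
    (hab : (d:ℝ) < α + β) :
    ∃ c : ℝ, 0 < c ∧ ∀ x : Fin d → ℤ, x ≠ 0 →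
      (∑' y : {y : Fin d → ℤ // y ≠ 0 ∧ y ≠ x},
          ENNReal.ofReal (l1 (y : Fin d → ℤ) ^ (-β) * l1 (x - (y : Fin d → ℤ)) ^ (-α)))
        ≤ ENNReal.ofReal (c * l1 x ^ ((d : ℝ) - β - α)) := by
  -- constants
  set Cb : ℝ≥0∞ := (2:ℝ≥0∞) ^ (3 * (d:ℝ)) * (1 - (2:ℝ≥0∞) ^ (β - (d:ℝ)))⁻¹ with hCb
  set Ca : ℝ≥0∞ := (2:ℝ≥0∞) ^ (3 * (d:ℝ)) * (1 - (2:ℝ≥0∞) ^ (α - (d:ℝ)))⁻¹ with hCa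
  set Ct : ℝ≥0∞ := (2:ℝ≥0∞) ^ (3 * (d:ℝ)) * (1 - (2:ℝ≥0∞) ^ ((d:ℝ) - (β + α)))⁻¹
      * (2:ℝ≥0∞) ^ ((β + α) - (d:ℝ)) with hCt
  have hone : ∀ t : ℝ, t < 0 → (1 : ℝ≥0∞) - (2:ℝ≥0∞) ^ t ≠ 0 := by
    intro t ht
    have : (2:ℝ≥0∞) ^ t < 1 := by
      have := ENNReal.rpow_lt_rpow_of_exponent_lt (x := 2) (by norm_num) (by norm_num) ht
      simpa using this
    simpa [tsub_eq_zero_iff_le] using this.not_ge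
  have hCbT : Cb ≠ ⊤ := by
    rw [hCb]
    exact ENNReal.mul_ne_top (two_rpow_ne_top _) (ENNReal.inv_ne_top.mpr (hone _ (by linarith)))
  have hCaT : Ca ≠ ⊤ := by
    rw [hCa]
    exact ENNReal.mul_ne_top (two_rpow_ne_top _) (ENNReal.inv_ne_top.mpr (hone _ (by linarith)))
  have hCtT : Ct ≠ ⊤ := by
    rw [hCt]
    exact ENNReal.mul_ne_top (ENNReal.mul_ne_top (two_rpow_ne_top _)
      (ENNReal.inv_ne_top.mpr (hone _ (by linarith)))) (two_rpow_ne_top _)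
  set Ctot : ℝ≥0∞ := (2:ℝ≥0∞) ^ α * Cb + Ct + ((2:ℝ≥0∞) ^ β * Ca + Ct) with hCtot
  have hCtotT : Ctot ≠ ⊤ := by
    rw [hCtot]
    refine ENNReal.add_ne_top.mpr ⟨ENNReal.add_ne_top.mpr ⟨?_, hCtT⟩, ENNReal.add_ne_top.mpr ⟨?_, hCtT⟩⟩
    · exact ENNReal.mul_ne_top (two_rpow_ne_top _) hCbT
    · exact ENNReal.mul_ne_top (two_rpow_ne_top _) hCaT
  refine ⟨Ctot.toReal + 1, by positivity, ?_⟩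
  intro x hx
  set n : ℕ := Nn x with hn
  have hn1 : 1 ≤ n := Nn_pos hx
  have hnE0 : ((n:ℝ≥0∞)) ≠ 0 := by
    simp only [ne_eq, Nat.cast_eq_zero]
    omega
  have hnET : ((n:ℝ≥0∞)) ≠ ⊤ := ENNReal.natCast_ne_top n
  have hcomb : ∀ s t : ℝ, (n:ℝ≥0∞) ^ s * (n:ℝ≥0∞) ^ t = (n:ℝ≥0∞) ^ (s + t) :=
    fun s t => (ENNReal.rpow_add s t hnE0 hnET).symm
  -- the term function and its pieces
  set T : (Fin d → ℤ) → ℝ≥0∞ :=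
    fun y => (Nn y : ℝ≥0∞) ^ (-β) * (Nn (x - y) : ℝ≥0∞) ^ (-α) with hT
  set G : (Fin d → ℤ) → ℝ≥0∞ := fun y => if y ≠ 0 ∧ y ≠ x then T y else 0 with hG
  set GA : (Fin d → ℤ) → ℝ≥0∞ :=
    fun y => if (y ≠ 0 ∧ y ≠ x) ∧ Nn y ≤ Nn (x - y) ∧ Nn y ≤ n then T y else 0 with hGA
  set GB : (Fin d → ℤ) → ℝ≥0∞ :=
    fun y => if (y ≠ 0 ∧ y ≠ x) ∧ Nn y ≤ Nn (x - y) ∧ n < Nn y then T y else 0 with hGB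
  set GC : (Fin d → ℤ) → ℝ≥0∞ :=
    fun y => if (y ≠ 0 ∧ y ≠ x) ∧ Nn (x - y) < Nn y ∧ Nn (x - y) ≤ n then T y else 0 with hGC
  set GD : (Fin d → ℤ) → ℝ≥0∞ :=
    fun y => if (y ≠ 0 ∧ y ≠ x) ∧ Nn (x - y) < Nn y ∧ n < Nn (x - y) then T y else 0 with hGD
  have hstart : (∑' y : {y : Fin d → ℤ // y ≠ 0 ∧ y ≠ x},
      ENNReal.ofReal (l1 (y : Fin d → ℤ) ^ (-β) * l1 (x - (y : Fin d → ℤ)) ^ (-α)))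
      = ∑' y, G y := by
    have h1 := tsum_subtype {y : Fin d → ℤ | y ≠ 0 ∧ y ≠ x}
      (fun y => ENNReal.ofReal (l1 y ^ (-β) * l1 (x - y) ^ (-α)))
    refine Eq.trans h1 ?_
    congr 1
    funext y
    by_cases hy : y ≠ 0 ∧ y ≠ x
    · have e1 : Set.indicator {y : Fin d → ℤ | y ≠ 0 ∧ y ≠ x}
          (fun y => ENNReal.ofReal (l1 y ^ (-β) * l1 (x - y) ^ (-α))) y
          = ENNReal.ofReal (l1 y ^ (-β) * l1 (x - y) ^ (-α)) := Set.indicator_of_mem (show y ∈ {y : Fin d → ℤ | y ≠ 0 ∧ y ≠ x} from hy) _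
      rw [e1, term_eq x hy.1 hy.2]
      exact (if_pos hy).symm
    · have e1 : Set.indicator {y : Fin d → ℤ | y ≠ 0 ∧ y ≠ x}
          (fun y => ENNReal.ofReal (l1 y ^ (-β) * l1 (x - y) ^ (-α))) y
          = 0 := Set.indicator_of_notMem (show y ∉ {y : Fin d → ℤ | y ≠ 0 ∧ y ≠ x} from hy) _
      rw [e1]
      exact (if_neg hy).symm
  have hsplit : ∀ y, G y ≤ GA y + GB y + GC y + GD y := by
    intro y
    rw [hG]
    simp only
    by_cases hy : y ≠ 0 ∧ y ≠ x
    · rw [if_pos hy]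
      rcases le_or_gt (Nn y) (Nn (x - y)) with h1 | h1
      · rcases le_or_gt (Nn y) n with h2 | h2
        · have : GA y = T y := if_pos ⟨hy, h1, h2⟩
          rw [← this]
          exact le_add_right (le_add_right (le_add_right le_rfl))
        · have : GB y = T y := if_pos ⟨hy, h1, h2⟩
          rw [← this]
          exact le_add_right (le_add_right (le_add_left le_rfl))
      · rcases le_or_gt (Nn (x - y)) n with h2 | h2
        · have : GC y = T y := if_pos ⟨hy, h1, h2⟩
          rw [← this]
          exact le_add_right (le_add_left le_rfl)
        · have : GD y = T y := if_pos ⟨hy, h1, h2⟩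
          rw [← this]
          exact le_add_left le_rfl
    · rw [if_neg hy]
      exact zero_le
  -- Bound for GA
  have hboundA : ∑' y, GA y ≤ (2:ℝ≥0∞) ^ α * Cb * (n:ℝ≥0∞) ^ ((d:ℝ) - β - α) := by
    have hA : ∀ y, GA y ≤ ((2:ℝ≥0∞) ^ α * (n:ℝ≥0∞) ^ (-α))
        * (if 1 ≤ Nn y ∧ Nn y ≤ n then (Nn y : ℝ≥0∞) ^ (-β) else 0) := by
      intro y
      rw [hGA]
      simp only
      by_cases hc : (y ≠ 0 ∧ y ≠ x) ∧ Nn y ≤ Nn (x - y) ∧ Nn y ≤ n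
      · rw [if_pos hc, if_pos ⟨Nn_pos hc.1.1, hc.2.2⟩, hT]
        have htri : n ≤ 2 * Nn (x - y) := by
          have := Nn_triangle x y
          omega
        calc (Nn y : ℝ≥0∞) ^ (-β) * (Nn (x - y) : ℝ≥0∞) ^ (-α)
            ≤ (Nn y : ℝ≥0∞) ^ (-β) * ((2:ℝ≥0∞) ^ α * (n:ℝ≥0∞) ^ (-α)) :=
              mul_le_mul_right (half_bound htri hα.le) _
          _ = (2:ℝ≥0∞) ^ α * (n:ℝ≥0∞) ^ (-α) * (Nn y : ℝ≥0∞) ^ (-β) := by ring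
      · rw [if_neg hc]
        exact zero_le
    calc ∑' y, GA y ≤ ∑' y, ((2:ℝ≥0∞) ^ α * (n:ℝ≥0∞) ^ (-α))
          * (if 1 ≤ Nn y ∧ Nn y ≤ n then (Nn y : ℝ≥0∞) ^ (-β) else 0) :=
            ENNReal.tsum_le_tsum hA
      _ = ((2:ℝ≥0∞) ^ α * (n:ℝ≥0∞) ^ (-α))
          * ∑' y, (if 1 ≤ Nn y ∧ Nn y ≤ n then (Nn y : ℝ≥0∞) ^ (-β) else 0) :=
            ENNReal.tsum_mul_left
      _ ≤ ((2:ℝ≥0∞) ^ α * (n:ℝ≥0∞) ^ (-α)) * (Cb * (n:ℝ≥0∞) ^ ((d:ℝ) - β)) := by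
          apply mul_le_mul_right
          apply ball_sum β hβ.le (by linarith) n hn1
          intro y hy
          have hcond : 1 ≤ Nn y ∧ Nn y ≤ n := by
            by_contra hcc
            exact hy (if_neg hcc)
          rw [if_pos hcond]
          exact ⟨hcond.1, hcond.2, le_rfl⟩
      _ = (2:ℝ≥0∞) ^ α * Cb * ((n:ℝ≥0∞) ^ (-α) * (n:ℝ≥0∞) ^ ((d:ℝ) - β)) := by ring
      _ = (2:ℝ≥0∞) ^ α * Cb * (n:ℝ≥0∞) ^ ((d:ℝ) - β - α) := by
          rw [hcomb]
          congr 1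
          ring
  -- Bound for GB
  have hboundB : ∑' y, GB y ≤ Ct * (n:ℝ≥0∞) ^ ((d:ℝ) - β - α) := by
    have hB : ∀ y, GB y ≤ (if n ≤ Nn y then (Nn y : ℝ≥0∞) ^ (-(β + α)) else 0) := by
      intro y
      rw [hGB]
      simp only
      by_cases hc : (y ≠ 0 ∧ y ≠ x) ∧ Nn y ≤ Nn (x - y) ∧ n < Nn y
      · rw [if_pos hc, if_pos (le_of_lt hc.2.2), hT]
        have hy1 : (Nn y : ℝ≥0∞) ≠ 0 := by
          have := Nn_pos hc.1.1
          simp only [ne_eq, Nat.cast_eq_zero]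
          omega
        calc (Nn y : ℝ≥0∞) ^ (-β) * (Nn (x - y) : ℝ≥0∞) ^ (-α)
            ≤ (Nn y : ℝ≥0∞) ^ (-β) * (Nn y : ℝ≥0∞) ^ (-α) :=
              mul_le_mul_right (nat_rpow_anti hc.2.1 (by linarith)) _
          _ = (Nn y : ℝ≥0∞) ^ (-β + -α) := (ENNReal.rpow_add _ _ hy1 (ENNReal.natCast_ne_top _)).symm
          _ = (Nn y : ℝ≥0∞) ^ (-(β + α)) := by congr 1; ring
      · rw [if_neg hc]
        exact zero_le
    calc ∑' y, GB y ≤ ∑' y, (if n ≤ Nn y then (Nn y : ℝ≥0∞) ^ (-(β + α)) else 0) :=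
          ENNReal.tsum_le_tsum hB
      _ ≤ (2:ℝ≥0∞) ^ (3 * (d:ℝ)) * (1 - (2:ℝ≥0∞) ^ ((d:ℝ) - (β + α)))⁻¹
          * (2:ℝ≥0∞) ^ ((β + α) - (d:ℝ)) * (n:ℝ≥0∞) ^ ((d:ℝ) - (β + α)) := by
          apply tail_sum (β + α) (by linarith) (by linarith) n hn1
          intro y hy
          have hcond : n ≤ Nn y := by
            by_contra hcc
            exact hy (if_neg hcc)
          rw [if_pos hcond]
          exact ⟨hcond, le_rfl⟩
      _ = Ct * (n:ℝ≥0∞) ^ ((d:ℝ) - β - α) := by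
          rw [hCt]
          congr 1
          ring
  -- Bound for GC (change of variables z ↦ x - z)
  have hchgC : ∑' y, GC y = ∑' z, GC (x - z) := by
    have := Equiv.tsum_eq (Equiv.subLeft x) GC
    simp only [Equiv.subLeft_apply] at this
    exact this.symm
  have hboundC : ∑' y, GC y ≤ (2:ℝ≥0∞) ^ β * Ca * (n:ℝ≥0∞) ^ ((d:ℝ) - β - α) := by
    rw [hchgC]
    have hC : ∀ z, GC (x - z) ≤ ((2:ℝ≥0∞) ^ β * (n:ℝ≥0∞) ^ (-β))
        * (if 1 ≤ Nn z ∧ Nn z ≤ n then (Nn z : ℝ≥0∞) ^ (-α) else 0) := by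
      intro z
      rw [hGC]
      simp only [sub_sub_cancel]
      by_cases hc : ((x - z ≠ 0 ∧ x - z ≠ x) ∧ Nn z < Nn (x - z) ∧ Nn z ≤ n)
      · rw [if_pos hc, hT]
        simp only [sub_sub_cancel]
        have hz0 : z ≠ 0 := by
          rintro rfl
          exact hc.1.2 (by simp)
        rw [if_pos ⟨Nn_pos hz0, hc.2.2⟩]
        have htri : n ≤ 2 * Nn (x - z) := by
          have := Nn_triangle x z
          omega
        exact mul_le_mul_left (half_bound htri hβ.le) _
      · rw [if_neg hc]
        exact zero_le
    calc ∑' z, GC (x - z) ≤ ∑' z, ((2:ℝ≥0∞) ^ β * (n:ℝ≥0∞) ^ (-β))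
          * (if 1 ≤ Nn z ∧ Nn z ≤ n then (Nn z : ℝ≥0∞) ^ (-α) else 0) :=
            ENNReal.tsum_le_tsum hC
      _ = ((2:ℝ≥0∞) ^ β * (n:ℝ≥0∞) ^ (-β))
          * ∑' z, (if 1 ≤ Nn z ∧ Nn z ≤ n then (Nn z : ℝ≥0∞) ^ (-α) else 0) :=
            ENNReal.tsum_mul_left
      _ ≤ ((2:ℝ≥0∞) ^ β * (n:ℝ≥0∞) ^ (-β)) * (Ca * (n:ℝ≥0∞) ^ ((d:ℝ) - α)) := by
          apply mul_le_mul_right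
          apply ball_sum α hα.le (by linarith) n hn1
          intro z hz
          have hcond : 1 ≤ Nn z ∧ Nn z ≤ n := by
            by_contra hcc
            exact hz (if_neg hcc)
          rw [if_pos hcond]
          exact ⟨hcond.1, hcond.2, le_rfl⟩
      _ = (2:ℝ≥0∞) ^ β * Ca * ((n:ℝ≥0∞) ^ (-β) * (n:ℝ≥0∞) ^ ((d:ℝ) - α)) := by ring
      _ = (2:ℝ≥0∞) ^ β * Ca * (n:ℝ≥0∞) ^ ((d:ℝ) - β - α) := by
          rw [hcomb]
          congr 1
          ring
  -- Bound for GD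
  have hchgD : ∑' y, GD y = ∑' z, GD (x - z) := by
    have := Equiv.tsum_eq (Equiv.subLeft x) GD
    simp only [Equiv.subLeft_apply] at this
    exact this.symm
  have hboundD : ∑' y, GD y ≤ Ct * (n:ℝ≥0∞) ^ ((d:ℝ) - β - α) := by
    rw [hchgD]
    have hD : ∀ z, GD (x - z) ≤ (if n ≤ Nn z then (Nn z : ℝ≥0∞) ^ (-(β + α)) else 0) := by
      intro z
      rw [hGD]
      simp only [sub_sub_cancel]
      by_cases hc : ((x - z ≠ 0 ∧ x - z ≠ x) ∧ Nn z < Nn (x - z) ∧ n < Nn z)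
      · rw [if_pos hc, hT]
        simp only [sub_sub_cancel]
        rw [if_pos (le_of_lt hc.2.2)]
        have hz1 : (Nn z : ℝ≥0∞) ≠ 0 := by
          have := hc.2.2
          simp only [ne_eq, Nat.cast_eq_zero]
          omega
        calc (Nn (x - z) : ℝ≥0∞) ^ (-β) * (Nn z : ℝ≥0∞) ^ (-α)
            ≤ (Nn z : ℝ≥0∞) ^ (-β) * (Nn z : ℝ≥0∞) ^ (-α) :=
              mul_le_mul_left (nat_rpow_anti (le_of_lt hc.2.1) (by linarith)) _
          _ = (Nn z : ℝ≥0∞) ^ (-β + -α) := (ENNReal.rpow_add _ _ hz1 (ENNReal.natCast_ne_top _)).symm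
          _ = (Nn z : ℝ≥0∞) ^ (-(β + α)) := by congr 1; ring
      · rw [if_neg hc]
        exact zero_le
    calc ∑' z, GD (x - z) ≤ ∑' z, (if n ≤ Nn z then (Nn z : ℝ≥0∞) ^ (-(β + α)) else 0) :=
          ENNReal.tsum_le_tsum hD
      _ ≤ (2:ℝ≥0∞) ^ (3 * (d:ℝ)) * (1 - (2:ℝ≥0∞) ^ ((d:ℝ) - (β + α)))⁻¹
          * (2:ℝ≥0∞) ^ ((β + α) - (d:ℝ)) * (n:ℝ≥0∞) ^ ((d:ℝ) - (β + α)) := by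
          apply tail_sum (β + α) (by linarith) (by linarith) n hn1
          intro z hz
          have hcond : n ≤ Nn z := by
            by_contra hcc
            exact hz (if_neg hcc)
          rw [if_pos hcond]
          exact ⟨hcond, le_rfl⟩
      _ = Ct * (n:ℝ≥0∞) ^ ((d:ℝ) - β - α) := by
          rw [hCt]
          congr 1
          ring
  -- assemble
  have htotal : (∑' y : {y : Fin d → ℤ // y ≠ 0 ∧ y ≠ x},
      ENNReal.ofReal (l1 (y : Fin d → ℤ) ^ (-β) * l1 (x - (y : Fin d → ℤ)) ^ (-α)))
      ≤ Ctot * (n:ℝ≥0∞) ^ ((d:ℝ) - β - α) := by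
    rw [hstart]
    calc ∑' y, G y ≤ ∑' y, (GA y + GB y + GC y + GD y) := ENNReal.tsum_le_tsum hsplit
      _ = (∑' y, GA y) + (∑' y, GB y) + (∑' y, GC y) + (∑' y, GD y) := by
          rw [ENNReal.tsum_add, ENNReal.tsum_add, ENNReal.tsum_add]
      _ ≤ (2:ℝ≥0∞) ^ α * Cb * (n:ℝ≥0∞) ^ ((d:ℝ) - β - α)
          + Ct * (n:ℝ≥0∞) ^ ((d:ℝ) - β - α)
          + (2:ℝ≥0∞) ^ β * Ca * (n:ℝ≥0∞) ^ ((d:ℝ) - β - α)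
          + Ct * (n:ℝ≥0∞) ^ ((d:ℝ) - β - α) := by
          gcongr
      _ = Ctot * (n:ℝ≥0∞) ^ ((d:ℝ) - β - α) := by
          rw [hCtot]
          ring
  refine htotal.trans ?_
  have hrhs : ENNReal.ofReal ((Ctot.toReal + 1) * l1 x ^ ((d:ℝ) - β - α))
      = ENNReal.ofReal (Ctot.toReal + 1) * (n:ℝ≥0∞) ^ ((d:ℝ) - β - α) := by
    have hl1 : (0:ℝ) < l1 x := by
      rw [l1_eq]
      exact_mod_cast hn1
    rw [ENNReal.ofReal_mul (by positivity)]
    congr 1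
    rw [← ENNReal.ofReal_rpow_of_pos hl1, l1_eq, ENNReal.ofReal_natCast, hn]
  rw [hrhs]
  apply mul_le_mul_left
  calc Ctot = ENNReal.ofReal Ctot.toReal := (ENNReal.ofReal_toReal hCtotT).symm
    _ ≤ ENNReal.ofReal (Ctot.toReal + 1) := ENNReal.ofReal_le_ofReal (by linarith)

open scoped Classical in
lemma partB (α : ℝ) (hα : 0 < α) (hαd : (d:ℝ) < α) :
    ∃ c : ℝ, 0 < c ∧ ∀ x : Fin d → ℤ, x ≠ 0 →
      (∑' y : {y : Fin d → ℤ // y ≠ 0 ∧ y ≠ x},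
          ENNReal.ofReal (l1 (y : Fin d → ℤ) ^ (-α) * l1 (x - (y : Fin d → ℤ)) ^ (-α)))
        ≤ ENNReal.ofReal (c * l1 x ^ (-α)) := by
  set Ct2 : ℝ≥0∞ := (2:ℝ≥0∞) ^ (3 * (d:ℝ)) * (1 - (2:ℝ≥0∞) ^ ((d:ℝ) - α))⁻¹
      * (2:ℝ≥0∞) ^ (α - (d:ℝ)) with hCt2
  have hone : ∀ t : ℝ, t < 0 → (1 : ℝ≥0∞) - (2:ℝ≥0∞) ^ t ≠ 0 := by
    intro t ht
    have : (2:ℝ≥0∞) ^ t < 1 := by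
      have := ENNReal.rpow_lt_rpow_of_exponent_lt (x := 2) (by norm_num) (by norm_num) ht
      simpa using this
    simpa [tsub_eq_zero_iff_le] using this.not_ge
  have hCt2T : Ct2 ≠ ⊤ := by
    rw [hCt2]
    exact ENNReal.mul_ne_top (ENNReal.mul_ne_top (two_rpow_ne_top _)
      (ENNReal.inv_ne_top.mpr (hone _ (by linarith)))) (two_rpow_ne_top _)
  set Ctot : ℝ≥0∞ := (2:ℝ≥0∞) ^ α * Ct2 + (2:ℝ≥0∞) ^ α * Ct2 with hCtot
  have hCtotT : Ctot ≠ ⊤ := by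
    rw [hCtot]
    exact ENNReal.add_ne_top.mpr ⟨ENNReal.mul_ne_top (two_rpow_ne_top _) hCt2T,
      ENNReal.mul_ne_top (two_rpow_ne_top _) hCt2T⟩
  refine ⟨Ctot.toReal + 1, by positivity, ?_⟩
  intro x hx
  set n : ℕ := Nn x with hn
  have hn1 : 1 ≤ n := Nn_pos hx
  have hnE0 : ((n:ℝ≥0∞)) ≠ 0 := by
    simp only [ne_eq, Nat.cast_eq_zero]
    omega
  have hnET : ((n:ℝ≥0∞)) ≠ ⊤ := ENNReal.natCast_ne_top n
  set T : (Fin d → ℤ) → ℝ≥0∞ :=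
    fun y => (Nn y : ℝ≥0∞) ^ (-α) * (Nn (x - y) : ℝ≥0∞) ^ (-α) with hT
  set G : (Fin d → ℤ) → ℝ≥0∞ := fun y => if y ≠ 0 ∧ y ≠ x then T y else 0 with hG
  set GA : (Fin d → ℤ) → ℝ≥0∞ :=
    fun y => if (y ≠ 0 ∧ y ≠ x) ∧ Nn y ≤ Nn (x - y) then T y else 0 with hGA
  set GB : (Fin d → ℤ) → ℝ≥0∞ :=
    fun y => if (y ≠ 0 ∧ y ≠ x) ∧ Nn (x - y) < Nn y then T y else 0 with hGB
  have hstart : (∑' y : {y : Fin d → ℤ // y ≠ 0 ∧ y ≠ x},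
      ENNReal.ofReal (l1 (y : Fin d → ℤ) ^ (-α) * l1 (x - (y : Fin d → ℤ)) ^ (-α)))
      = ∑' y, G y := by
    have h1 := tsum_subtype {y : Fin d → ℤ | y ≠ 0 ∧ y ≠ x}
      (fun y => ENNReal.ofReal (l1 y ^ (-α) * l1 (x - y) ^ (-α)))
    refine Eq.trans h1 ?_
    congr 1
    funext y
    by_cases hy : y ≠ 0 ∧ y ≠ x
    · have e1 : Set.indicator {y : Fin d → ℤ | y ≠ 0 ∧ y ≠ x}
          (fun y => ENNReal.ofReal (l1 y ^ (-α) * l1 (x - y) ^ (-α))) y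
          = ENNReal.ofReal (l1 y ^ (-α) * l1 (x - y) ^ (-α)) :=
            Set.indicator_of_mem (show y ∈ {y : Fin d → ℤ | y ≠ 0 ∧ y ≠ x} from hy) _
      rw [e1, term_eq x hy.1 hy.2]
      exact (if_pos hy).symm
    · have e1 : Set.indicator {y : Fin d → ℤ | y ≠ 0 ∧ y ≠ x}
          (fun y => ENNReal.ofReal (l1 y ^ (-α) * l1 (x - y) ^ (-α))) y
          = 0 := Set.indicator_of_notMem (show y ∉ {y : Fin d → ℤ | y ≠ 0 ∧ y ≠ x} from hy) _
      rw [e1]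
      exact (if_neg hy).symm
  have hsplit : ∀ y, G y ≤ GA y + GB y := by
    intro y
    rw [hG]
    simp only
    by_cases hy : y ≠ 0 ∧ y ≠ x
    · rw [if_pos hy]
      rcases le_or_gt (Nn y) (Nn (x - y)) with h1 | h1
      · have : GA y = T y := if_pos ⟨hy, h1⟩
        rw [← this]
        exact le_add_right le_rfl
      · have : GB y = T y := if_pos ⟨hy, h1⟩
        rw [← this]
        exact le_add_left le_rfl
    · rw [if_neg hy]
      exact zero_le
  have htail : ∑' y : Fin d → ℤ, (if 1 ≤ Nn y then (Nn y : ℝ≥0∞) ^ (-α) else 0) ≤ Ct2 := by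
    have := tail_sum (d := d) α (by linarith) (by linarith) 1 le_rfl
      (fun y => if 1 ≤ Nn y then (Nn y : ℝ≥0∞) ^ (-α) else 0) (by
        intro y hy
        have hcond : 1 ≤ Nn y := by
          by_contra hcc
          exact hy (if_neg hcc)
        rw [if_pos hcond]
        exact ⟨hcond, le_rfl⟩)
    calc ∑' y : Fin d → ℤ, (if 1 ≤ Nn y then (Nn y : ℝ≥0∞) ^ (-α) else 0)
        ≤ (2:ℝ≥0∞) ^ (3 * (d:ℝ)) * (1 - (2:ℝ≥0∞) ^ ((d:ℝ) - α))⁻¹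
          * (2:ℝ≥0∞) ^ (α - (d:ℝ)) * ((1:ℕ):ℝ≥0∞) ^ ((d:ℝ) - α) := this
      _ = Ct2 := by
          rw [hCt2, Nat.cast_one, ENNReal.one_rpow, mul_one]
  have hboundA : ∑' y, GA y ≤ (2:ℝ≥0∞) ^ α * Ct2 * (n:ℝ≥0∞) ^ (-α) := by
    have hA : ∀ y, GA y ≤ ((2:ℝ≥0∞) ^ α * (n:ℝ≥0∞) ^ (-α))
        * (if 1 ≤ Nn y then (Nn y : ℝ≥0∞) ^ (-α) else 0) := by
      intro y
      rw [hGA]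
      simp only
      by_cases hc : (y ≠ 0 ∧ y ≠ x) ∧ Nn y ≤ Nn (x - y)
      · rw [if_pos hc, if_pos (Nn_pos hc.1.1), hT]
        have htri : n ≤ 2 * Nn (x - y) := by
          have := Nn_triangle x y
          omega
        calc (Nn y : ℝ≥0∞) ^ (-α) * (Nn (x - y) : ℝ≥0∞) ^ (-α)
            ≤ (Nn y : ℝ≥0∞) ^ (-α) * ((2:ℝ≥0∞) ^ α * (n:ℝ≥0∞) ^ (-α)) :=
              mul_le_mul_right (half_bound htri hα.le) _
          _ = (2:ℝ≥0∞) ^ α * (n:ℝ≥0∞) ^ (-α) * (Nn y : ℝ≥0∞) ^ (-α) := by ring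
      · rw [if_neg hc]
        exact zero_le
    calc ∑' y, GA y ≤ ∑' y, ((2:ℝ≥0∞) ^ α * (n:ℝ≥0∞) ^ (-α))
          * (if 1 ≤ Nn y then (Nn y : ℝ≥0∞) ^ (-α) else 0) := ENNReal.tsum_le_tsum hA
      _ = ((2:ℝ≥0∞) ^ α * (n:ℝ≥0∞) ^ (-α))
          * ∑' y, (if 1 ≤ Nn y then (Nn y : ℝ≥0∞) ^ (-α) else 0) := ENNReal.tsum_mul_left
      _ ≤ ((2:ℝ≥0∞) ^ α * (n:ℝ≥0∞) ^ (-α)) * Ct2 := mul_le_mul_right htail _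
      _ = (2:ℝ≥0∞) ^ α * Ct2 * (n:ℝ≥0∞) ^ (-α) := by ring
  have hchgB : ∑' y, GB y = ∑' z, GB (x - z) := by
    have := Equiv.tsum_eq (Equiv.subLeft x) GB
    simp only [Equiv.subLeft_apply] at this
    exact this.symm
  have hboundB : ∑' y, GB y ≤ (2:ℝ≥0∞) ^ α * Ct2 * (n:ℝ≥0∞) ^ (-α) := by
    rw [hchgB]
    have hB : ∀ z, GB (x - z) ≤ ((2:ℝ≥0∞) ^ α * (n:ℝ≥0∞) ^ (-α))
        * (if 1 ≤ Nn z then (Nn z : ℝ≥0∞) ^ (-α) else 0) := by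
      intro z
      rw [hGB]
      simp only [sub_sub_cancel]
      by_cases hc : ((x - z ≠ 0 ∧ x - z ≠ x) ∧ Nn z < Nn (x - z))
      · rw [if_pos hc, hT]
        simp only [sub_sub_cancel]
        have hz0 : z ≠ 0 := by
          rintro rfl
          exact hc.1.2 (by simp)
        rw [if_pos (Nn_pos hz0)]
        have htri : n ≤ 2 * Nn (x - z) := by
          have := Nn_triangle x z
          omega
        exact mul_le_mul_left (half_bound htri hα.le) _
      · rw [if_neg hc]
        exact zero_le
    calc ∑' z, GB (x - z) ≤ ∑' z, ((2:ℝ≥0∞) ^ α * (n:ℝ≥0∞) ^ (-α))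
          * (if 1 ≤ Nn z then (Nn z : ℝ≥0∞) ^ (-α) else 0) := ENNReal.tsum_le_tsum hB
      _ = ((2:ℝ≥0∞) ^ α * (n:ℝ≥0∞) ^ (-α))
          * ∑' z, (if 1 ≤ Nn z then (Nn z : ℝ≥0∞) ^ (-α) else 0) := ENNReal.tsum_mul_left
      _ ≤ ((2:ℝ≥0∞) ^ α * (n:ℝ≥0∞) ^ (-α)) * Ct2 := mul_le_mul_right htail _
      _ = (2:ℝ≥0∞) ^ α * Ct2 * (n:ℝ≥0∞) ^ (-α) := by ring
  have htotal : (∑' y : {y : Fin d → ℤ // y ≠ 0 ∧ y ≠ x},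
      ENNReal.ofReal (l1 (y : Fin d → ℤ) ^ (-α) * l1 (x - (y : Fin d → ℤ)) ^ (-α)))
      ≤ Ctot * (n:ℝ≥0∞) ^ (-α) := by
    rw [hstart]
    calc ∑' y, G y ≤ ∑' y, (GA y + GB y) := ENNReal.tsum_le_tsum hsplit
      _ = (∑' y, GA y) + (∑' y, GB y) := ENNReal.tsum_add
      _ ≤ (2:ℝ≥0∞) ^ α * Ct2 * (n:ℝ≥0∞) ^ (-α) + (2:ℝ≥0∞) ^ α * Ct2 * (n:ℝ≥0∞) ^ (-α) := by
          gcongr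
      _ = Ctot * (n:ℝ≥0∞) ^ (-α) := by
          rw [hCtot]
          ring
  refine htotal.trans ?_
  have hrhs : ENNReal.ofReal ((Ctot.toReal + 1) * l1 x ^ (-α))
      = ENNReal.ofReal (Ctot.toReal + 1) * (n:ℝ≥0∞) ^ (-α) := by
    have hl1 : (0:ℝ) < l1 x := by
      rw [l1_eq]
      exact_mod_cast hn1
    rw [ENNReal.ofReal_mul (by positivity)]
    congr 1
    rw [← ENNReal.ofReal_rpow_of_pos hl1, l1_eq, ENNReal.ofReal_natCast, hn]
  rw [hrhs]
  apply mul_le_mul_left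
  calc Ctot = ENNReal.ofReal Ctot.toReal := (ENNReal.ofReal_toReal hCtotT).symm
    _ ≤ ENNReal.ofReal (Ctot.toReal + 1) := ENNReal.ofReal_le_ofReal (by linarith)

end PL


/-- **Power-law lattice sums** (Corollary 2.4). For `α, β > 0` there is a constant
`c > 0` depending only on `α`, `β` and `d` such that for every `x ∈ ℤ^d \ {0}`:
(a) if `0 < α, β < d` and `α + β > d`, then
`Σ_{y ≠ 0, x} ‖y‖₁^{-β} ‖x-y‖₁^{-α} ≤ c ‖x‖₁^{d-β-α}`;
(b) if `α > d`, then `Σ_{y ≠ 0, x} ‖y‖₁^{-α} ‖x-y‖₁^{-α} ≤ c ‖x‖₁^{-α}`. -/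
theorem power_law_lattice_sums {d : ℕ} (hd : 1 ≤ d) (α β : ℝ) (hα : 0 < α) (hβ : 0 < β) :
    (α < d → β < d → (d : ℝ) < α + β →
      ∃ c : ℝ, 0 < c ∧ ∀ x : Fin d → ℤ, x ≠ 0 →
        (∑' y : {y : Fin d → ℤ // y ≠ 0 ∧ y ≠ x},
            ENNReal.ofReal (l1 (y : Fin d → ℤ) ^ (-β) * l1 (x - (y : Fin d → ℤ)) ^ (-α)))
          ≤ ENNReal.ofReal (c * l1 x ^ ((d : ℝ) - β - α))) ∧
    ((d : ℝ) < α →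
      ∃ c : ℝ, 0 < c ∧ ∀ x : Fin d → ℤ, x ≠ 0 →
        (∑' y : {y : Fin d → ℤ // y ≠ 0 ∧ y ≠ x},
            ENNReal.ofReal (l1 (y : Fin d → ℤ) ^ (-α) * l1 (x - (y : Fin d → ℤ)) ^ (-α)))
          ≤ ENNReal.ofReal (c * l1 x ^ (-α))) := by
  exact ⟨fun hαd hβd hab => PL.partA α β hα hβ hαd hβd hab, fun hαd => PL.partB α hα hαd⟩
end
end
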